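/- arXiv:0707.0537 — 8 statements merged into one kernel-verified Lean document; each statement's English description precedes it below -/
import Mathlib

section
/- Let δ, δ' ≥ 2 be real numbers and fix x ∈ ℝ. Suppose (m_{n,p})_{(n,p)∈ℕ×ℕ} is a family of differentiable functions m_{n,p} : [0,∞) → ℝ such that m_{0,0}(t) = 1 for all t ≥ 0, m_{n,p}(0) = x^n (1−x)^p, and for every (n,p) ≠ (0,0) and t ≥ 0, m_{n,p}'(t) = −a_{n+p} m_{n,p}(t) + c_n(δ') m_{n−1,p}(t) + c_p(δ) m_{n,p−1}(t), where any term with a negative index is omitted (consistently with c_0(γ) = 0). Then for all (n,p) ∈ ℕ×ℕ and all t ≥ 0: m_{n,p}(t) = e^{−a_{n+p} t} x^n (1−x)^p + Σ_{0≤k≤n, 0≤l≤p, (k,l)≠(0,0)} C(k+l, k) · (Π_{r=n−k+1}^{n} c_r(δ')) · (Π_{s=p−l+1}^{p} c_s(δ)) · B_t(a_{n+p}, a_{n+p−1}, …, a_{n+p−(k+l)}) · x^{n−k} (1−x)^{p−l}, where C(m,k) denotes the binomial coefficient and an empty product equals 1. -/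
open Finset Real

/-- `aC δ δ' n = n (2(n-1) + δ + δ')`. -/
noncomputable def aC (δ δ' : ℝ) (n : ℕ) : ℝ := (n : ℝ) * (2 * ((n : ℝ) - 1) + δ + δ')

/-- `cC γ n = n (2(n-1) + γ)`. -/
noncomputable def cC (γ : ℝ) (n : ℕ) : ℝ := (n : ℝ) * (2 * ((n : ℝ) - 1) + γ)

/-- `Bt t k b = B_t(b 0, …, b k)` for strictly decreasing `b 0 > b 1 > … > b k`. -/
noncomputable def Bt (t : ℝ) (k : ℕ) (b : ℕ → ℝ) : ℝ :=
  (-1 : ℝ) ^ k * ∑ j ∈ Finset.range (k + 1),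
    (-1 : ℝ) ^ j * Real.exp (-(b j) * t) /
      ∏ l ∈ (Finset.range (k + 1)).erase j, |b j - b l|

/-- signed divided-difference form -/
noncomputable def Dt (t : ℝ) (k : ℕ) (b : ℕ → ℝ) : ℝ :=
  ∑ j ∈ Finset.range (k + 1),
    Real.exp (-(b j) * t) * (∏ l ∈ (Finset.range (k + 1)).erase j, (b j - b l))⁻¹

/-- strictly decreasing on `{0,…,k}` -/
def SDec (k : ℕ) (b : ℕ → ℝ) : Prop := ∀ i j, i < j → j ≤ k → b j < b i

lemma SDec.tail {k : ℕ} {b : ℕ → ℝ} (hb : SDec (k+1) b) : SDec k (fun j => b (j+1)) :=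
  fun i j hij hj => hb (i+1) (j+1) (by omega) (by omega)

lemma SDec.ne {k : ℕ} {b : ℕ → ℝ} (hb : SDec k b) {i j : ℕ} (hi : i ≤ k) (hj : j ≤ k)
    (hij : i ≠ j) : b i ≠ b j := by
  rcases hij.lt_or_gt with h | h
  · exact (hb i j h hj).ne'
  · exact (hb j i h hi).ne

lemma prod_sign {k : ℕ} {b : ℕ → ℝ} (hb : SDec k b) {j : ℕ} (hj : j ≤ k) :
    ∏ l ∈ (Finset.range (k + 1)).erase j, |b j - b l|
      = (-1 : ℝ) ^ j * ∏ l ∈ (Finset.range (k + 1)).erase j, (b j - b l) := by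
  have key : ∀ l ∈ (Finset.range (k + 1)).erase j,
      |b j - b l| = (if l < j then (-1:ℝ) else 1) * (b j - b l) := by
    intro l hl
    simp only [mem_erase, mem_range] at hl
    rcases lt_or_gt_of_ne hl.1 with h | h
    · rw [if_pos h, abs_of_neg (sub_neg.2 (hb l j h hj)), neg_one_mul]
    · rw [if_neg (by omega), abs_of_pos (sub_pos.2 (hb j l h (by omega))), one_mul]
  rw [Finset.prod_congr rfl key, Finset.prod_mul_distrib]
  congr 1
  rw [Finset.prod_ite, Finset.prod_const, Finset.prod_const, one_pow, mul_one]
  have hf : Finset.filter (fun l => l < j) ((Finset.range (k + 1)).erase j)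
      = Finset.range j := by
    ext l; simp only [mem_filter, mem_erase, mem_range]; omega
  rw [hf, Finset.card_range]

lemma Bt_eq_Dt {t : ℝ} {k : ℕ} {b : ℕ → ℝ} (hb : SDec k b) :
    Bt t k b = (-1 : ℝ) ^ k * Dt t k b := by
  unfold Bt Dt
  congr 1
  refine Finset.sum_congr rfl fun j hj => ?_
  rw [mem_range] at hj
  rw [prod_sign hb (by omega),
    mul_div_mul_left _ _ (pow_ne_zero j (by norm_num : (-1:ℝ) ≠ 0)), div_eq_mul_inv]

lemma prod_sub_ne_zero {k : ℕ} {b : ℕ → ℝ} (hb : SDec k b) {j : ℕ} (hj : j ≤ k) :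
    ∏ l ∈ (Finset.range (k + 1)).erase j, (b j - b l) ≠ 0 := by
  rw [Finset.prod_ne_zero_iff]
  intro l hl
  simp only [mem_erase, mem_range] at hl
  exact sub_ne_zero.2 (hb.ne hj (by omega) hl.1.symm)

lemma leadingCoeff_basisDivisor {x y : ℝ} (h : x ≠ y) :
    (Lagrange.basisDivisor x y).leadingCoeff = (x - y)⁻¹ := by
  rw [Lagrange.basisDivisor, Polynomial.leadingCoeff_mul, Polynomial.leadingCoeff_C,
    (Polynomial.monic_X_sub_C y).leadingCoeff, mul_one]

lemma Dt_at_zero {k : ℕ} (hk : 1 ≤ k) {b : ℕ → ℝ} (hb : SDec k b) : Dt 0 k b = 0 := by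
  have hinj : Set.InjOn b (Finset.range (k+1)) := by
    intro i hi j hj hij
    by_contra h
    exact hb.ne (by simpa using Nat.lt_succ_iff.mp (by simpa using hi))
      (by simpa using Nat.lt_succ_iff.mp (by simpa using hj)) h hij
  have hsum := Lagrange.sum_basis (s := Finset.range (k+1)) (v := b) hinj ⟨0, by simp⟩
  have hcoeff := congrArg (fun q => Polynomial.coeff q k) hsum
  simp only [Polynomial.finset_sum_coeff] at hcoeff
  have h1 : Polynomial.coeff (1 : Polynomial ℝ) k = 0 := by
    rw [Polynomial.coeff_one, if_neg (by omega)]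
  rw [h1] at hcoeff
  have h2 : ∀ j ∈ Finset.range (k+1),
      Polynomial.coeff (Lagrange.basis (Finset.range (k+1)) b j) k
        = (∏ l ∈ (Finset.range (k + 1)).erase j, (b j - b l))⁻¹ := by
    intro j hj
    have hdeg : (Lagrange.basis (Finset.range (k+1)) b j).natDegree = k := by
      rw [Lagrange.natDegree_basis hinj hj]; simp
    have hlc : (Lagrange.basis (Finset.range (k+1)) b j).coeff k
        = (Lagrange.basis (Finset.range (k+1)) b j).leadingCoeff := by
      rw [Polynomial.leadingCoeff, hdeg]
    rw [hlc, Lagrange.basis, Polynomial.leadingCoeff_prod]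
    rw [← Finset.prod_inv_distrib]
    refine Finset.prod_congr rfl fun l hl => ?_
    simp only [mem_erase, mem_range] at hl hj
    exact leadingCoeff_basisDivisor (hb.ne (by omega) (by omega) hl.1.symm)
  rw [Finset.sum_congr rfl h2] at hcoeff
  unfold Dt
  simpa using hcoeff

lemma Dt_zero {t : ℝ} {b : ℕ → ℝ} : Dt t 0 b = Real.exp (-(b 0) * t) := by
  simp [Dt]

lemma Bt_zero {t : ℝ} {b : ℕ → ℝ} : Bt t 0 b = Real.exp (-(b 0) * t) := by
  simp [Bt]

lemma Bt_at_zero {k : ℕ} (hk : 1 ≤ k) {b : ℕ → ℝ} (hb : SDec k b) : Bt 0 k b = 0 := by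
  rw [Bt_eq_Dt hb, Dt_at_zero hk hb, mul_zero]

lemma hasDerivAt_exp_neg (c t : ℝ) :
    HasDerivAt (fun t => Real.exp (-c * t)) (-c * Real.exp (-c * t)) t := by
  have h := ((hasDerivAt_id t).const_mul (-c)).exp
  simpa [mul_comm] using h

lemma hasDerivAt_Dt (t : ℝ) (k : ℕ) (b : ℕ → ℝ) :
    HasDerivAt (fun t => Dt t k b)
      (∑ j ∈ Finset.range (k + 1), -(b j) *
        (Real.exp (-(b j) * t) *
          (∏ l ∈ (Finset.range (k + 1)).erase j, (b j - b l))⁻¹)) t := by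
  unfold Dt
  refine HasDerivAt.fun_sum fun j hj => ?_
  have h1 := (hasDerivAt_exp_neg (b j) t).mul_const
    (∏ l ∈ (Finset.range (k + 1)).erase j, (b j - b l))⁻¹
  refine HasDerivAt.congr_deriv h1 (Eq.symm ?_)
  ring

lemma Dt_deriv_sum {t : ℝ} {k : ℕ} {b : ℕ → ℝ} (hb : SDec (k+1) b) :
    (∑ j ∈ Finset.range (k + 2), -(b j) *
        (Real.exp (-(b j) * t) *
          (∏ l ∈ (Finset.range (k + 2)).erase j, (b j - b l))⁻¹))
      = -(b 0) * Dt t (k+1) b - Dt t k (fun j => b (j+1)) := by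
  have hsplit : ∀ j ∈ Finset.range (k + 2), -(b j) *
        (Real.exp (-(b j) * t) * (∏ l ∈ (Finset.range (k + 2)).erase j, (b j - b l))⁻¹)
      = -(b 0) * (Real.exp (-(b j) * t) * (∏ l ∈ (Finset.range (k + 2)).erase j, (b j - b l))⁻¹)
        + (b 0 - b j) * (Real.exp (-(b j) * t) * (∏ l ∈ (Finset.range (k + 2)).erase j, (b j - b l))⁻¹) := by
    intro j _; ring
  rw [Finset.sum_congr rfl hsplit, Finset.sum_add_distrib, ← Finset.mul_sum]
  have h0 : (∑ j ∈ Finset.range (k + 2), (b 0 - b j) *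
      (Real.exp (-(b j) * t) * (∏ l ∈ (Finset.range (k + 2)).erase j, (b j - b l))⁻¹))
      = - Dt t k (fun j => b (j+1)) := by
    rw [Finset.sum_range_succ']
    simp only [sub_self, zero_mul, add_zero]
    unfold Dt
    rw [← Finset.sum_neg_distrib]
    refine Finset.sum_congr rfl fun j hj => ?_
    rw [mem_range] at hj
    have hset : (Finset.range (k + 2)).erase (j+1)
        = insert 0 (Finset.image Nat.succ ((Finset.range (k+1)).erase j)) := by
      ext l
      simp only [mem_erase, mem_range, mem_insert, mem_image, Nat.succ_eq_add_one]
      constructor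
      · rintro ⟨h1, h2⟩
        rcases Nat.eq_zero_or_pos l with h | h
        · exact Or.inl h
        · exact Or.inr ⟨l - 1, ⟨by omega, by omega⟩, by omega⟩
      · rintro (h | ⟨a, ⟨ha1, ha2⟩, rfl⟩) <;> omega
    have h0notmem : (0 : ℕ) ∉ Finset.image Nat.succ ((Finset.range (k+1)).erase j) := by
      simp
    rw [hset, Finset.prod_insert h0notmem,
      Finset.prod_image (fun a _ c _ h => Nat.succ_injective h)]
    have hc : b (j+1) - b 0 ≠ 0 :=
      sub_ne_zero.2 (hb.ne (by omega) (by omega) (by omega))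
    rw [mul_inv]
    have : (b 0 - b (j+1)) * ((b (j+1) - b 0)⁻¹
        * (∏ l ∈ (Finset.range (k+1)).erase j, (b (j+1) - b (l+1)))⁻¹)
        = -(∏ l ∈ (Finset.range (k+1)).erase j, (b (j+1) - b (l+1)))⁻¹ := by
      rw [← mul_assoc, ← neg_sub (b (j+1)) (b 0), neg_mul, mul_inv_cancel₀ hc]
      ring
    calc (b 0 - b (j+1)) * (Real.exp (-(b (j+1)) * t) * ((b (j+1) - b 0)⁻¹
          * (∏ l ∈ (Finset.range (k+1)).erase j, (b (j+1) - b (l+1)))⁻¹))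
        = ((b 0 - b (j+1)) * ((b (j+1) - b 0)⁻¹
          * (∏ l ∈ (Finset.range (k+1)).erase j, (b (j+1) - b (l+1)))⁻¹))
          * Real.exp (-(b (j+1)) * t) := by ring
      _ = -(Real.exp (-(b (j+1)) * t)
          * (∏ l ∈ (Finset.range (k+1)).erase j, (b (j+1) - b (l+1)))⁻¹) := by
          rw [this]; ring
  rw [h0]
  rfl

lemma SDec.tail' {k : ℕ} {b : ℕ → ℝ} (hb : SDec (k+1) b) : SDec k (fun j => b (j+1)) :=
  hb.tail

lemma hasDerivAt_Bt {t : ℝ} {k : ℕ} {b : ℕ → ℝ} (hb : SDec (k+1) b) :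
    HasDerivAt (fun t => Bt t (k+1) b)
      (-(b 0) * Bt t (k+1) b + Bt t k (fun j => b (j+1))) t := by
  have h2 : (fun t => Bt t (k+1) b) = fun t => (-1:ℝ)^(k+1) * Dt t (k+1) b :=
    funext fun t => Bt_eq_Dt hb
  rw [h2]
  have h3 := (hasDerivAt_Dt t (k+1) b).const_mul ((-1:ℝ)^(k+1))
  refine HasDerivAt.congr_deriv h3 (Eq.symm ?_)
  rw [Dt_deriv_sum hb, Bt_eq_Dt hb, Bt_eq_Dt hb.tail]
  ring

lemma hasDerivAt_Bt0 {t : ℝ} {b : ℕ → ℝ} :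
    HasDerivAt (fun t => Bt t 0 b) (-(b 0) * Bt t 0 b) t := by
  have h2 : (fun t => Bt t 0 b) = fun t => Real.exp (-(b 0) * t) :=
    funext fun t => Bt_zero
  rw [h2, Bt_zero]
  exact hasDerivAt_exp_neg (b 0) t

lemma aC_lt {δ δ' : ℝ} (hδ : 2 ≤ δ) (hδ' : 2 ≤ δ') {i j : ℕ} (h : i < j) :
    aC δ δ' i < aC δ δ' j := by
  unfold aC
  have hij : (i : ℝ) + 1 ≤ j := by exact_mod_cast h
  have hi : (0 : ℝ) ≤ i := Nat.cast_nonneg i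
  nlinarith

lemma sdec_aC {δ δ' : ℝ} (hδ : 2 ≤ δ) (hδ' : 2 ≤ δ') (N K : ℕ) (hK : K ≤ N) :
    SDec K (fun j => aC δ δ' (N - j)) :=
  fun i j hij hj => aC_lt hδ hδ' (by omega)

noncomputable def Tm (δ δ' x : ℝ) (n p k l : ℕ) (t : ℝ) : ℝ :=
  ((k + l).choose k : ℝ) * (∏ r ∈ Finset.Icc (n - k + 1) n, cC δ' r) *
    (∏ s ∈ Finset.Icc (p - l + 1) p, cC δ s) *
    Bt t (k + l) (fun j => aC δ δ' (n + p - j)) * x ^ (n - k) * (1 - x) ^ (p - l)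

noncomputable def FF (δ δ' x : ℝ) (n p : ℕ) (t : ℝ) : ℝ :=
  ∑ kl ∈ Finset.range (n + 1) ×ˢ Finset.range (p + 1), Tm δ δ' x n p kl.1 kl.2 t

lemma FF_eq (δ δ' x : ℝ) (n p : ℕ) (t : ℝ) :
    FF δ δ' x n p t = Real.exp (-(aC δ δ' (n + p)) * t) * x ^ n * (1 - x) ^ p +
        ∑ kl ∈ (Finset.range (n + 1) ×ˢ Finset.range (p + 1)).erase (0, 0),
          ((kl.1 + kl.2).choose kl.1 : ℝ) *
            (∏ r ∈ Finset.Icc (n - kl.1 + 1) n, cC δ' r) *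
            (∏ s ∈ Finset.Icc (p - kl.2 + 1) p, cC δ s) *
            Bt t (kl.1 + kl.2) (fun j => aC δ δ' (n + p - j)) *
            x ^ (n - kl.1) * (1 - x) ^ (p - kl.2) := by
  unfold FF
  rw [← Finset.add_sum_erase _ _ (show ((0:ℕ), (0:ℕ)) ∈
    Finset.range (n + 1) ×ˢ Finset.range (p + 1) by simp)]
  congr 1
  unfold Tm
  rw [show Finset.Icc (n - 0 + 1) n = ∅ from Finset.Icc_eq_empty (by omega),
    show Finset.Icc (p - 0 + 1) p = ∅ from Finset.Icc_eq_empty (by omega)]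
  simp [Bt_zero]

lemma FF_init (δ δ' x : ℝ) (hδ : 2 ≤ δ) (hδ' : 2 ≤ δ') (n p : ℕ) :
    FF δ δ' x n p 0 = x ^ n * (1 - x) ^ p := by
  rw [FF_eq]
  have hz : ∀ kl ∈ (Finset.range (n + 1) ×ˢ Finset.range (p + 1)).erase (0, 0),
      ((kl.1 + kl.2).choose kl.1 : ℝ) *
            (∏ r ∈ Finset.Icc (n - kl.1 + 1) n, cC δ' r) *
            (∏ s ∈ Finset.Icc (p - kl.2 + 1) p, cC δ s) *
            Bt 0 (kl.1 + kl.2) (fun j => aC δ δ' (n + p - j)) *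
            x ^ (n - kl.1) * (1 - x) ^ (p - kl.2) = 0 := by
    rintro ⟨k, l⟩ hkl
    simp only [Finset.mem_erase, Finset.mem_product, Finset.mem_range, Prod.mk.injEq] at hkl
    have h1 : 1 ≤ k + l := by
      rcases hkl with ⟨hne, hk, hl⟩
      by_contra h
      have hk0 : k = 0 := by omega
      have hl0 : l = 0 := by omega
      subst hk0; subst hl0
      exact hne (by simp)
    rw [Bt_at_zero h1 (sdec_aC hδ hδ' (n + p) (k + l) (by omega))]
    ring
  rw [Finset.sum_eq_zero hz, add_zero]
  simp

noncomputable def Em (δ δ' x : ℝ) (n p k l : ℕ) (t : ℝ) : ℝ :=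
  ((k + l).choose k : ℝ) * (∏ r ∈ Finset.Icc (n - k + 1) n, cC δ' r) *
    (∏ s ∈ Finset.Icc (p - l + 1) p, cC δ s) *
    Bt t (k + l - 1) (fun j => aC δ δ' (n + p - 1 - j)) * x ^ (n - k) * (1 - x) ^ (p - l)

lemma hasDerivAt_Tm0 (δ δ' x : ℝ) (n p : ℕ) (t : ℝ) :
    HasDerivAt (fun t => Tm δ δ' x n p 0 0 t) (-(aC δ δ' (n + p)) * Tm δ δ' x n p 0 0 t) t := by
  have hfun : (fun t => Tm δ δ' x n p 0 0 t)
      = fun t => Bt t 0 (fun j => aC δ δ' (n + p - j)) *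
        (((0 + 0).choose 0 : ℝ) * (∏ r ∈ Finset.Icc (n - 0 + 1) n, cC δ' r) *
          (∏ s ∈ Finset.Icc (p - 0 + 1) p, cC δ s) * x ^ (n - 0) * (1 - x) ^ (p - 0)) := by
    funext t; unfold Tm; ring
  rw [hfun]
  have h := (hasDerivAt_Bt0 (t := t) (b := fun j => aC δ δ' (n + p - j))).mul_const
    (((0 + 0).choose 0 : ℝ) * (∏ r ∈ Finset.Icc (n - 0 + 1) n, cC δ' r) *
      (∏ s ∈ Finset.Icc (p - 0 + 1) p, cC δ s) * x ^ (n - 0) * (1 - x) ^ (p - 0))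
  refine HasDerivAt.congr_deriv h (Eq.symm ?_)
  unfold Tm
  simp only [Nat.sub_zero]
  ring

lemma hasDerivAt_Tm1 (δ δ' x : ℝ) (hδ : 2 ≤ δ) (hδ' : 2 ≤ δ') {n p k l : ℕ}
    (hkl : 1 ≤ k + l) (hkn : k ≤ n) (hlp : l ≤ p) (t : ℝ) :
    HasDerivAt (fun t => Tm δ δ' x n p k l t)
      (-(aC δ δ' (n + p)) * Tm δ δ' x n p k l t + Em δ δ' x n p k l t) t := by
  obtain ⟨K, hK⟩ : ∃ K, k + l = K + 1 := ⟨k + l - 1, by omega⟩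
  have hsd : SDec (K + 1) (fun j => aC δ δ' (n + p - j)) := by
    rw [← hK]; exact sdec_aC hδ hδ' _ _ (by omega)
  have hfun : (fun t => Tm δ δ' x n p k l t)
      = fun t => Bt t (K + 1) (fun j => aC δ δ' (n + p - j)) *
        (((K + 1).choose k : ℝ) * (∏ r ∈ Finset.Icc (n - k + 1) n, cC δ' r) *
          (∏ s ∈ Finset.Icc (p - l + 1) p, cC δ s) * x ^ (n - k) * (1 - x) ^ (p - l)) := by
    funext t; unfold Tm; rw [hK]; ring
  rw [hfun]
  have h := (hasDerivAt_Bt (t := t) hsd).mul_const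
    (((K + 1).choose k : ℝ) * (∏ r ∈ Finset.Icc (n - k + 1) n, cC δ' r) *
      (∏ s ∈ Finset.Icc (p - l + 1) p, cC δ s) * x ^ (n - k) * (1 - x) ^ (p - l))
  refine HasDerivAt.congr_deriv h (Eq.symm ?_)
  unfold Tm Em
  rw [hK]
  have harg : (fun j => aC δ δ' (n + p - 1 - j)) = fun j => aC δ δ' (n + p - (j + 1)) :=
    funext fun j => by congr 1; omega
  simp only [Nat.add_sub_cancel, Nat.sub_zero, harg]
  ring

noncomputable def Am (δ δ' x : ℝ) (n p : ℕ) (t : ℝ) (kl : ℕ × ℕ) : ℝ :=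
  if kl.1 = 0 then 0 else
    ((kl.1 + kl.2 - 1).choose (kl.1 - 1) : ℝ) * (∏ r ∈ Finset.Icc (n - kl.1 + 1) n, cC δ' r) *
    (∏ s ∈ Finset.Icc (p - kl.2 + 1) p, cC δ s) *
    Bt t (kl.1 + kl.2 - 1) (fun j => aC δ δ' (n + p - 1 - j)) *
    x ^ (n - kl.1) * (1 - x) ^ (p - kl.2)

noncomputable def Bm (δ δ' x : ℝ) (n p : ℕ) (t : ℝ) (kl : ℕ × ℕ) : ℝ :=
  if kl.2 = 0 then 0 else
    ((kl.1 + kl.2 - 1).choose kl.1 : ℝ) * (∏ r ∈ Finset.Icc (n - kl.1 + 1) n, cC δ' r) *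
    (∏ s ∈ Finset.Icc (p - kl.2 + 1) p, cC δ s) *
    Bt t (kl.1 + kl.2 - 1) (fun j => aC δ δ' (n + p - 1 - j)) *
    x ^ (n - kl.1) * (1 - x) ^ (p - kl.2)

lemma Em_eq_Am_add_Bm (δ δ' x : ℝ) (n p : ℕ) (t : ℝ) (k l : ℕ) (h : ¬(k = 0 ∧ l = 0)) :
    Em δ δ' x n p k l t = Am δ δ' x n p t (k, l) + Bm δ δ' x n p t (k, l) := by
  unfold Em Am Bm
  match k, l with
  | 0, 0 => exact absurd ⟨rfl, rfl⟩ h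
  | k + 1, 0 =>
    simp only [if_pos rfl, if_neg (Nat.succ_ne_zero k), add_zero, Nat.add_sub_cancel]
    norm_num [Nat.choose_self]
  | 0, l + 1 =>
    simp only [if_pos rfl, if_neg (Nat.succ_ne_zero l), zero_add, Nat.add_sub_cancel]
    norm_num [Nat.choose_zero_right]
  | k + 1, l + 1 =>
    rw [if_neg (Nat.succ_ne_zero k), if_neg (Nat.succ_ne_zero l)]
    have h1 : (k + 1) + (l + 1) - 1 = k + l + 1 := by omega
    have h2 : (k + 1) + (l + 1) = (k + l + 1) + 1 := by omega
    have h3 : k + 1 - 1 = k := rfl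
    rw [h1, h2, h3, Nat.choose_succ_succ (k + l + 1) k]
    push_cast
    ring

lemma Am_sum (δ δ' x : ℝ) (n p : ℕ) (t : ℝ) :
    ∑ kl ∈ Finset.range (n + 1) ×ˢ Finset.range (p + 1), Am δ δ' x n p t kl
      = cC δ' n * FF δ δ' x (n - 1) p t := by
  rw [Finset.sum_product]
  match n with
  | 0 =>
    have : ∀ K ∈ Finset.range 1, ∑ L ∈ Finset.range (p + 1), Am δ δ' x 0 p t (K, L) = 0 := by
      intro K hK
      rw [Finset.mem_range] at hK
      interval_cases K
      exact Finset.sum_eq_zero fun L _ => by simp [Am]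
    rw [Finset.sum_congr rfl this]
    simp [cC]
  | n' + 1 =>
    rw [Finset.sum_range_succ']
    have h0 : ∑ L ∈ Finset.range (p + 1), Am δ δ' x (n' + 1) p t (0, L) = 0 :=
      Finset.sum_eq_zero fun L _ => by simp [Am]
    rw [h0, add_zero]
    unfold FF
    rw [Finset.sum_product, Finset.mul_sum]
    refine Finset.sum_congr rfl fun k hk => ?_
    rw [Finset.mul_sum]
    refine Finset.sum_congr rfl fun L hL => ?_
    rw [Finset.mem_range] at hk hL
    unfold Am Tm
    rw [if_neg (Nat.succ_ne_zero k)]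
    have e1 : (k + 1) + L - 1 = k + L := by omega
    have e2 : (n' + 1) + p - 1 = n' + p := by omega
    have e3 : n' + 1 - (k + 1) = n' - k := by omega
    simp only [e1, e2, e3, Nat.add_sub_cancel]
    rw [Finset.prod_Icc_succ_top (by omega : n' - k + 1 ≤ n' + 1)]
    ring
  
lemma Bm_sum (δ δ' x : ℝ) (n p : ℕ) (t : ℝ) :
    ∑ kl ∈ Finset.range (n + 1) ×ˢ Finset.range (p + 1), Bm δ δ' x n p t kl
      = cC δ p * FF δ δ' x n (p - 1) t := by
  rw [Finset.sum_product]
  match p with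
  | 0 =>
    have : ∀ K ∈ Finset.range (n + 1),
        ∑ L ∈ Finset.range 1, Bm δ δ' x n 0 t (K, L) = 0 := by
      intro K hK
      refine Finset.sum_eq_zero fun L hL => ?_
      rw [Finset.mem_range] at hL
      interval_cases L
      simp [Bm]
    rw [Finset.sum_congr rfl this]
    simp [cC]
  | p' + 1 =>
    have hinner : ∀ K ∈ Finset.range (n + 1),
        ∑ L ∈ Finset.range (p' + 1 + 1), Bm δ δ' x n (p' + 1) t (K, L)
          = ∑ l ∈ Finset.range (p' + 1), Bm δ δ' x n (p' + 1) t (K, l + 1) := by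
      intro K hK
      rw [Finset.sum_range_succ']
      have h0 : Bm δ δ' x n (p' + 1) t (K, 0) = 0 := by simp [Bm]
      rw [h0, add_zero]
    rw [Finset.sum_congr rfl hinner]
    unfold FF
    rw [Finset.sum_product, Finset.mul_sum]
    refine Finset.sum_congr rfl fun K hK => ?_
    rw [Finset.mul_sum]
    refine Finset.sum_congr rfl fun l hl => ?_
    rw [Finset.mem_range] at hK hl
    unfold Bm Tm
    rw [if_neg (Nat.succ_ne_zero l)]
    have e1 : K + (l + 1) - 1 = K + l := by omega
    have e2 : n + (p' + 1) - 1 = n + p' := by omega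
    have e3 : p' + 1 - (l + 1) = p' - l := by omega
    simp only [e1, e2, e3, Nat.add_sub_cancel]
    rw [Finset.prod_Icc_succ_top (by omega : p' - l + 1 ≤ p' + 1)]
    ring

lemma Em_sum (δ δ' x : ℝ) (n p : ℕ) (t : ℝ) :
    ∑ kl ∈ (Finset.range (n + 1) ×ˢ Finset.range (p + 1)).erase (0, 0),
        Em δ δ' x n p kl.1 kl.2 t
      = cC δ' n * FF δ δ' x (n - 1) p t + cC δ p * FF δ δ' x n (p - 1) t := by
  have h1 : ∑ kl ∈ (Finset.range (n + 1) ×ˢ Finset.range (p + 1)).erase (0, 0),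
      Em δ δ' x n p kl.1 kl.2 t
      = ∑ kl ∈ (Finset.range (n + 1) ×ˢ Finset.range (p + 1)).erase (0, 0),
        (Am δ δ' x n p t kl + Bm δ δ' x n p t kl) := by
    refine Finset.sum_congr rfl fun kl hkl => ?_
    rw [Finset.mem_erase] at hkl
    obtain ⟨k, l⟩ := kl
    refine Em_eq_Am_add_Bm δ δ' x n p t k l fun ⟨hk, hl⟩ => hkl.1 (by rw [hk, hl])
  rw [h1, Finset.sum_erase _ (by simp [Am, Bm]),
    Finset.sum_add_distrib, Am_sum, Bm_sum]

lemma hasDerivAt_FF (δ δ' x : ℝ) (hδ : 2 ≤ δ) (hδ' : 2 ≤ δ') (n p : ℕ) (t : ℝ) :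
    HasDerivAt (fun t => FF δ δ' x n p t)
      (-(aC δ δ' (n + p)) * FF δ δ' x n p t + cC δ' n * FF δ δ' x (n - 1) p t
        + cC δ p * FF δ δ' x n (p - 1) t) t := by
  have h : HasDerivAt (fun t => FF δ δ' x n p t)
      (∑ kl ∈ Finset.range (n + 1) ×ˢ Finset.range (p + 1),
        (-(aC δ δ' (n + p)) * Tm δ δ' x n p kl.1 kl.2 t +
          if kl = ((0 : ℕ), (0 : ℕ)) then 0 else Em δ δ' x n p kl.1 kl.2 t)) t := by
    unfold FF
    refine HasDerivAt.fun_sum fun kl hkl => ?_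
    simp only [Finset.mem_product, Finset.mem_range] at hkl
    by_cases hc : kl = ((0 : ℕ), (0 : ℕ))
    · rw [if_pos hc, hc, add_zero]
      exact hasDerivAt_Tm0 δ δ' x n p t
    · rw [if_neg hc]
      obtain ⟨k, l⟩ := kl
      have hkl1 : 1 ≤ k + l := by
        by_contra hcon
        exact hc (by simp only [Prod.mk.injEq]; omega)
      exact hasDerivAt_Tm1 δ δ' x hδ hδ' hkl1 (by omega) (by omega) t
  convert h using 1
  rw [Finset.sum_add_distrib, ← Finset.mul_sum]
  have h2 : ∑ kl ∈ Finset.range (n + 1) ×ˢ Finset.range (p + 1),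
      (if kl = ((0 : ℕ), (0 : ℕ)) then 0 else Em δ δ' x n p kl.1 kl.2 t)
      = ∑ kl ∈ (Finset.range (n + 1) ×ˢ Finset.range (p + 1)).erase (0, 0),
        Em δ δ' x n p kl.1 kl.2 t := by
    rw [← Finset.sum_erase (Finset.range (n + 1) ×ˢ Finset.range (p + 1))
      (f := fun kl => if kl = ((0 : ℕ), (0 : ℕ)) then 0 else Em δ δ' x n p kl.1 kl.2 t)
      (a := ((0 : ℕ), (0 : ℕ))) (by simp)]
    refine Finset.sum_congr rfl fun kl hkl => ?_
    rw [Finset.mem_erase] at hkl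
    rw [if_neg hkl.1]
  rw [h2, Em_sum]
  unfold FF
  ring

lemma deriv_unique_zero {c : ℝ} {g : ℝ → ℝ} (hg0 : g 0 = 0)
    (hgd : ∀ s, 0 ≤ s → HasDerivAt g (c * g s) s) : ∀ t, 0 ≤ t → g t = 0 := by
  intro t ht
  have hd : ∀ s, 0 ≤ s → HasDerivAt (fun s => Real.exp (-c * s) * g s) 0 s := by
    intro s hs
    have h := (hasDerivAt_exp_neg c s).mul (hgd s hs)
    refine HasDerivAt.congr_deriv h (Eq.symm ?_)
    ring
  have hcont : ContinuousOn (fun s => Real.exp (-c * s) * g s) (Set.Icc 0 t) :=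
    fun s hs => ((hd s hs.1).continuousAt).continuousWithinAt
  have hconst := constant_of_has_deriv_right_zero hcont
    (fun s hs => (hd s hs.1).hasDerivWithinAt) t (Set.right_mem_Icc.2 ht)
  simp only [mul_zero, hg0] at hconst
  have hepos := Real.exp_pos (-c * t)
  rcases mul_eq_zero.mp hconst with h | h
  · exact absurd h hepos.ne'
  · exact h

theorem stmt0 (δ δ' : ℝ) (hδ : 2 ≤ δ) (hδ' : 2 ≤ δ') (x : ℝ)
    (m : ℕ → ℕ → ℝ → ℝ)
    (h00 : ∀ t : ℝ, 0 ≤ t → m 0 0 t = 1)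
    (hinit : ∀ n p : ℕ, m n p 0 = x ^ n * (1 - x) ^ p)
    (hode : ∀ n p : ℕ, (n, p) ≠ (0, 0) → ∀ t : ℝ, 0 ≤ t →
      HasDerivAt (m n p)
        (-(aC δ δ' (n + p)) * m n p t + cC δ' n * m (n - 1) p t + cC δ p * m n (p - 1) t) t) :
    ∀ n p : ℕ, ∀ t : ℝ, 0 ≤ t →
      m n p t = Real.exp (-(aC δ δ' (n + p)) * t) * x ^ n * (1 - x) ^ p +
        ∑ kl ∈ (Finset.range (n + 1) ×ˢ Finset.range (p + 1)).erase (0, 0),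
          ((kl.1 + kl.2).choose kl.1 : ℝ) *
            (∏ r ∈ Finset.Icc (n - kl.1 + 1) n, cC δ' r) *
            (∏ s ∈ Finset.Icc (p - kl.2 + 1) p, cC δ s) *
            Bt t (kl.1 + kl.2) (fun j => aC δ δ' (n + p - j)) *
            x ^ (n - kl.1) * (1 - x) ^ (p - kl.2) := by
  have key : ∀ N n p : ℕ, n + p = N → ∀ t : ℝ, 0 ≤ t → m n p t = FF δ δ' x n p t := by
    intro N
    induction N using Nat.strong_induction_on with
    | _ N ih =>
      intro n p hN t ht
      by_cases h0 : n = 0 ∧ p = 0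
      · obtain ⟨rfl, rfl⟩ := h0
        rw [h00 t ht, FF_eq]
        have hempty : (Finset.range 1 ×ˢ Finset.range 1).erase ((0 : ℕ), (0 : ℕ)) = ∅ := by
          decide
        rw [hempty]
        simp [aC]
      · have hne : (n, p) ≠ ((0 : ℕ), (0 : ℕ)) := fun hc =>
          h0 ⟨congrArg Prod.fst hc, congrArg Prod.snd hc⟩
        have hgd : ∀ s, 0 ≤ s → HasDerivAt (fun s => m n p s - FF δ δ' x n p s)
            (-(aC δ δ' (n + p)) * (m n p s - FF δ δ' x n p s)) s := by
          intro s hs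
          have hm := hode n p hne s hs
          have hF := hasDerivAt_FF δ δ' x hδ hδ' n p s
          have e1 : cC δ' n * m (n - 1) p s = cC δ' n * FF δ δ' x (n - 1) p s := by
            rcases Nat.eq_zero_or_pos n with h | h
            · simp [h, cC]
            · rw [ih (N - 1) (by omega) (n - 1) p (by omega) s hs]
          have e2 : cC δ p * m n (p - 1) s = cC δ p * FF δ δ' x n (p - 1) s := by
            rcases Nat.eq_zero_or_pos p with h | h
            · simp [h, cC]
            · rw [ih (N - 1) (by omega) n (p - 1) (by omega) s hs]
          have hsub := hm.sub hF
          refine HasDerivAt.congr_deriv hsub (Eq.symm ?_)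
          linear_combination -e1 - e2
        have hg0 : m n p 0 - FF δ δ' x n p 0 = 0 := by
          rw [hinit, FF_init δ δ' x hδ hδ']; ring
        have hz := deriv_unique_zero (c := -(aC δ δ' (n + p)))
          (g := fun s => m n p s - FF δ δ' x n p s) hg0 hgd t ht
        have : m n p t - FF δ δ' x n p t = 0 := hz
        linarith
  intro n p t ht
  rw [key (n + p) n p rfl t ht, FF_eq]
end

section
/- Let δ, δ' ≥ 2 be real numbers. For all integers i, j with 0 ≤ i ≤ j and all integers k, l with 0 ≤ k ≤ i, 0 ≤ l ≤ j−i and (k,l) ≠ (0,0), the following identity holds: C(k+l, k) · (Π_{r=i−k+1}^{i} c_r(δ')) · (Π_{s=j−i−l+1}^{j−i} c_s(δ)) · B(i−k+δ'/2, j−i−l+δ/2) / B(i+δ'/2, j−i+δ/2) = [C(i,k) C(j−i,l) / C(j, k+l)] · Π_{m=j−k−l+1}^{j} a_m, where C(m,k) denotes the binomial coefficient and an empty product equals 1. -/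
open Finset Real

/-- Euler Beta function `B(a,b) = Γ(a)Γ(b)/Γ(a+b)`. -/
noncomputable def Beta (a b : ℝ) : ℝ := Real.Gamma a * Real.Gamma b / Real.Gamma (a + b)

lemma prodcC_mul (γ : ℝ) (hγ : 0 < γ) (p : ℕ) : ∀ i, p ≤ i →
    (p.factorial : ℝ) * Real.Gamma ((p:ℝ) + γ/2) * ∏ r ∈ Finset.Icc (p+1) i, cC γ r
      = 2^(i-p) * (i.factorial : ℝ) * Real.Gamma ((i:ℝ) + γ/2) := by
  intro i hi
  induction i, hi using Nat.le_induction with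
  | base => rw [Finset.Icc_eq_empty (by omega)]; simp
  | succ i hi ih =>
      rw [Finset.prod_Icc_succ_top (by omega), ← mul_assoc, ih]
      have h2 : Real.Gamma (((i+1:ℕ):ℝ) + γ/2) = ((i:ℝ)+γ/2) * Real.Gamma ((i:ℝ)+γ/2) := by
        push_cast
        rw [show (i:ℝ) + 1 + γ/2 = ((i:ℝ) + γ/2) + 1 by ring, Real.Gamma_add_one (by positivity)]
      rw [h2, show i+1-p = (i-p)+1 from by omega]
      simp only [cC, Nat.factorial_succ, pow_succ]
      push_cast
      ring

set_option maxHeartbeats 1600000 in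
theorem stmt2 (δ δ' : ℝ) (hδ : 2 ≤ δ) (hδ' : 2 ≤ δ')
    (i j k l : ℕ) (hij : i ≤ j) (hk : k ≤ i) (hl : l ≤ j - i) (hkl : (k, l) ≠ (0, 0)) :
    ((k + l).choose k : ℝ) *
        (∏ r ∈ Finset.Icc (i - k + 1) i, cC δ' r) *
        (∏ s ∈ Finset.Icc (j - i - l + 1) (j - i), cC δ s) *
        Beta (((i - k : ℕ) : ℝ) + δ' / 2) (((j - i - l : ℕ) : ℝ) + δ / 2) /
        Beta ((i : ℝ) + δ' / 2) (((j - i : ℕ) : ℝ) + δ / 2)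
      = ((i.choose k : ℝ) * ((j - i).choose l : ℝ) / (j.choose (k + l) : ℝ)) *
          ∏ m ∈ Finset.Icc (j - k - l + 1) j, aC δ δ' m := by
  obtain ⟨n, rfl⟩ : ∃ n, j = i + n := ⟨j - i, by omega⟩
  have hl' : l ≤ n := by omega
  rw [show i + n - i = n from by omega, show i + n - k - l = (i - k) + (n - l) from by omega]
  have hδ0 : (0:ℝ) < δ := by linarith
  have hδ'0 : (0:ℝ) < δ' := by linarith
  have hδδ' : (0:ℝ) < δ + δ' := by linarith
  have fp : ∀ m : ℕ, (0:ℝ) < m.factorial := fun m => by exact_mod_cast m.factorial_pos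
  have key1 := prodcC_mul δ' hδ'0 (i-k) i (by omega)
  have key2 := prodcC_mul δ hδ0 (n-l) n (by omega)
  have key3 := prodcC_mul (δ+δ') hδδ' ((i-k)+(n-l)) (i+n) (by omega)
  rw [show i - (i-k) = k from by omega] at key1
  rw [show n - (n-l) = l from by omega] at key2
  rw [show i + n - ((i-k)+(n-l)) = k + l from by omega] at key3
  have g1 : 0 < Real.Gamma (((i-k:ℕ):ℝ) + δ'/2) := Real.Gamma_pos_of_pos (by positivity)
  have g2 : 0 < Real.Gamma (((n-l:ℕ):ℝ) + δ/2) := Real.Gamma_pos_of_pos (by positivity)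
  have g3 : 0 < Real.Gamma ((i:ℝ) + δ'/2) := Real.Gamma_pos_of_pos (by positivity)
  have g4 : 0 < Real.Gamma ((n:ℝ) + δ/2) := Real.Gamma_pos_of_pos (by positivity)
  have g5 : 0 < Real.Gamma ((((i-k)+(n-l):ℕ):ℝ) + (δ+δ')/2) := Real.Gamma_pos_of_pos (by positivity)
  have g6 : 0 < Real.Gamma (((i+n:ℕ):ℝ) + (δ+δ')/2) := Real.Gamma_pos_of_pos (by positivity)
  have e1 : (∏ r ∈ Finset.Icc (i-k+1) i, cC δ' r)
      = (2^k * (i.factorial:ℝ) * Real.Gamma ((i:ℝ)+δ'/2))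
        / (((i-k).factorial : ℝ) * Real.Gamma (((i-k:ℕ):ℝ) + δ'/2)) := by
    rw [eq_div_iff (by exact mul_ne_zero (fp _).ne' g1.ne')]
    linear_combination key1
  have e2 : (∏ s ∈ Finset.Icc (n-l+1) n, cC δ s)
      = (2^l * (n.factorial:ℝ) * Real.Gamma ((n:ℝ)+δ/2))
        / (((n-l).factorial : ℝ) * Real.Gamma (((n-l:ℕ):ℝ) + δ/2)) := by
    rw [eq_div_iff (by exact mul_ne_zero (fp _).ne' g2.ne')]
    linear_combination key2
  have haC : (∏ m ∈ Finset.Icc ((i-k)+(n-l)+1) (i+n), aC δ δ' m)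
      = ∏ m ∈ Finset.Icc ((i-k)+(n-l)+1) (i+n), cC (δ+δ') m :=
    Finset.prod_congr rfl (fun m _ => by unfold aC cC; ring)
  have e3 : (∏ m ∈ Finset.Icc ((i-k)+(n-l)+1) (i+n), cC (δ+δ') m)
      = (2^(k+l) * ((i+n).factorial:ℝ) * Real.Gamma (((i+n:ℕ):ℝ)+(δ+δ')/2))
        / ((((i-k)+(n-l)).factorial : ℝ) * Real.Gamma ((((i-k)+(n-l):ℕ):ℝ) + (δ+δ')/2)) := by
    rw [eq_div_iff (by exact mul_ne_zero (fp _).ne' g5.ne')]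
    linear_combination key3
  rw [haC, e1, e2, e3]
  unfold Beta
  have hG5 : Real.Gamma ((((i-k):ℕ):ℝ) + δ'/2 + ((((n-l):ℕ):ℝ) + δ/2))
      = Real.Gamma ((((i-k)+(n-l):ℕ):ℝ) + (δ+δ')/2) := by congr 1; push_cast; ring
  have hG6 : Real.Gamma ((i:ℝ) + δ'/2 + (((n:ℕ):ℝ) + δ/2))
      = Real.Gamma (((i+n:ℕ):ℝ) + (δ+δ')/2) := by congr 1; push_cast; ring
  rw [hG5, hG6]
  rw [Nat.cast_choose ℝ hk, Nat.cast_choose ℝ hl',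
    Nat.cast_choose ℝ (show k + l ≤ i + n by omega),
    Nat.cast_choose ℝ (show k ≤ k + l by omega),
    show k + l - k = l from by omega,
    show i + n - (k + l) = (i-k)+(n-l) from by omega]
  have c1 := (fp (i-k)).ne'
  have c2 := (fp (n-l)).ne'
  have c3 := (fp i).ne'
  have c4 := (fp n).ne'
  have c5 := (fp k).ne'
  have c6 := (fp l).ne'
  have c7 := (fp (k+l)).ne'
  have c8 := (fp ((i-k)+(n-l))).ne'
  have c9 := (fp (i+n)).ne'
  set A := Real.Gamma (((i-k:ℕ):ℝ) + δ'/2) with hA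
  set B := Real.Gamma (((n-l:ℕ):ℝ) + δ/2) with hB
  set C := Real.Gamma ((i:ℝ) + δ'/2) with hC
  set D := Real.Gamma ((n:ℝ) + δ/2) with hD
  set E := Real.Gamma ((((i-k)+(n-l):ℕ):ℝ) + (δ+δ')/2) with hE
  set F := Real.Gamma (((i+n:ℕ):ℝ) + (δ+δ')/2) with hF
  field_simp [g1.ne', g2.ne', g3.ne', g4.ne', g5.ne', g6.ne']
  ring
end

section
/- Let δ, δ' ≥ 2 be real numbers. For all integers n, p, i, j with 0 ≤ i ≤ n and 0 ≤ j ≤ p, the following identity holds: B(i+δ'/2, j+δ/2) / B(n+δ'/2, p+δ/2) = [C(i+j, j) · Π_{m=i+j+1}^{n+p} a_m] / [C(n+p, p) · (Π_{r=i+1}^{n} c_r(δ')) · (Π_{s=j+1}^{p} c_s(δ))], where C(m,k) denotes the binomial coefficient and an empty product equals 1 (in particular the quotient equals 1 when (i,j) = (n,p)). -/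
open Finset Real

lemma gamma_prod (x : ℝ) (hx : 0 < x) (i : ℕ) :
    ∀ n, i ≤ n → Real.Gamma ((i:ℝ) + x) * ∏ r ∈ Icc (i+1) n, ((r:ℝ) - 1 + x)
      = Real.Gamma ((n:ℝ) + x) := by
  intro n
  induction n with
  | zero => intro h; interval_cases i; simp
  | succ m ih =>
    intro h
    rcases Nat.eq_or_lt_of_le h with h' | h'
    · subst h'; simp
    · have him : i ≤ m := Nat.lt_succ_iff.mp h'
      rw [Finset.prod_Icc_succ_top (by omega), ← mul_assoc, ih him]
      have hne : (m:ℝ) + x ≠ 0 := by positivity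
      rw [show ((m+1:ℕ):ℝ) + x = ((m:ℝ) + x) + 1 by push_cast; ring,
        Real.Gamma_add_one hne]
      push_cast; ring

lemma fact_prod (i : ℕ) : ∀ n, i ≤ n → (i.factorial : ℝ) * ∏ r ∈ Icc (i+1) n, (r:ℝ) = n.factorial := by
  intro n
  induction n with
  | zero => intro h; interval_cases i; simp
  | succ m ih =>
    intro h
    rcases Nat.eq_or_lt_of_le h with h' | h'
    · subst h'; simp
    · have him : i ≤ m := Nat.lt_succ_iff.mp h'
      rw [Finset.prod_Icc_succ_top (by omega), ← mul_assoc, ih him]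
      push_cast [Nat.factorial_succ]; ring

lemma cc_prod (γ : ℝ) (i n : ℕ) (h : i ≤ n) :
    ∏ r ∈ Icc (i+1) n, cC γ r
      = 2^(n-i) * (∏ r ∈ Icc (i+1) n, (r:ℝ)) * ∏ r ∈ Icc (i+1) n, ((r:ℝ) - 1 + γ/2) := by
  have : ∀ r ∈ Icc (i+1) n, cC γ r = 2 * ((r:ℝ) * ((r:ℝ) - 1 + γ/2)) := by
    intro r _; unfold cC; ring
  rw [Finset.prod_congr rfl this, Finset.prod_mul_distrib, Finset.prod_mul_distrib,
    Finset.prod_const, Nat.card_Icc]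
  have : n + 1 - (i+1) = n - i := by omega
  rw [this]; ring


lemma pos_of_mul_eq {a b c : ℝ} (ha : 0 < a) (hc : 0 < c) (h : a * b = c) : 0 < b := by
  nlinarith

theorem stmt3 (δ δ' : ℝ) (hδ : 2 ≤ δ) (hδ' : 2 ≤ δ')
    (n p i j : ℕ) (hi : i ≤ n) (hj : j ≤ p) :
    Beta ((i : ℝ) + δ' / 2) ((j : ℝ) + δ / 2) / Beta ((n : ℝ) + δ' / 2) ((p : ℝ) + δ / 2)
      = (((i + j).choose j : ℝ) * ∏ m ∈ Finset.Icc (i + j + 1) (n + p), aC δ δ' m) /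
          (((n + p).choose p : ℝ) * (∏ r ∈ Finset.Icc (i + 1) n, cC δ' r) *
            (∏ s ∈ Finset.Icc (j + 1) p, cC δ s)) := by
  have hs : 0 < δ/2 := by linarith
  have hs' : 0 < δ'/2 := by linarith
  have hss : 0 < (δ+δ')/2 := by linarith
  set PA := ∏ r ∈ Icc (i+1) n, ((r:ℝ) - 1 + δ'/2) with hPAdef
  set PB := ∏ r ∈ Icc (j+1) p, ((r:ℝ) - 1 + δ/2) with hPBdef
  set PE := ∏ r ∈ Icc (i+j+1) (n+p), ((r:ℝ) - 1 + (δ+δ')/2) with hPEdef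
  set QA := ∏ r ∈ Icc (i+1) n, (r:ℝ) with hQAdef
  set QB := ∏ r ∈ Icc (j+1) p, (r:ℝ) with hQBdef
  set QE := ∏ r ∈ Icc (i+j+1) (n+p), (r:ℝ) with hQEdef
  have h1 := gamma_prod (δ'/2) hs' i n hi
  have h2 := gamma_prod (δ/2) hs j p hj
  have h3 := gamma_prod ((δ+δ')/2) hss (i+j) (n+p) (by omega)
  have f1 := fact_prod i n hi
  have f2 := fact_prod j p hj
  have f3 := fact_prod (i+j) (n+p) (by omega)
  have e1 := cc_prod δ' i n hi
  have e2 := cc_prod δ j p hj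
  have e3 : ∏ m ∈ Icc (i+j+1) (n+p), aC δ δ' m = 2^(n+p-(i+j)) * QE * PE := by
    have : ∀ m ∈ Icc (i+j+1) (n+p), aC δ δ' m = cC (δ+δ') m := by
      intro m _; unfold aC cC; ring
    rw [Finset.prod_congr rfl this, cc_prod (δ+δ') (i+j) (n+p) (by omega)]
  -- positivity
  have hΓi : 0 < Real.Gamma ((i:ℝ) + δ'/2) := Real.Gamma_pos_of_pos (by positivity)
  have hΓj : 0 < Real.Gamma ((j:ℝ) + δ/2) := Real.Gamma_pos_of_pos (by positivity)
  have hΓn : 0 < Real.Gamma ((n:ℝ) + δ'/2) := Real.Gamma_pos_of_pos (by positivity)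
  have hΓp : 0 < Real.Gamma ((p:ℝ) + δ/2) := Real.Gamma_pos_of_pos (by positivity)
  have hΓij : 0 < Real.Gamma (((i+j:ℕ):ℝ) + (δ+δ')/2) := Real.Gamma_pos_of_pos (by positivity)
  have hΓnp : 0 < Real.Gamma (((n+p:ℕ):ℝ) + (δ+δ')/2) := Real.Gamma_pos_of_pos (by positivity)
  have hPA : 0 < PA := pos_of_mul_eq hΓi hΓn h1
  have hPB : 0 < PB := pos_of_mul_eq hΓj hΓp h2
  have hPE : 0 < PE := pos_of_mul_eq hΓij hΓnp h3
  have hfi : (0:ℝ) < i.factorial := by exact_mod_cast Nat.factorial_pos i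
  have hfj : (0:ℝ) < j.factorial := by exact_mod_cast Nat.factorial_pos j
  have hfij : (0:ℝ) < (i+j).factorial := by exact_mod_cast Nat.factorial_pos (i+j)
  have hfn : (0:ℝ) < n.factorial := by exact_mod_cast Nat.factorial_pos n
  have hfp : (0:ℝ) < p.factorial := by exact_mod_cast Nat.factorial_pos p
  have hfnp : (0:ℝ) < (n+p).factorial := by exact_mod_cast Nat.factorial_pos (n+p)
  have hQA : 0 < QA := pos_of_mul_eq hfi hfn f1
  have hQB : 0 < QB := pos_of_mul_eq hfj hfp f2
  have hQE : 0 < QE := pos_of_mul_eq hfij hfnp f3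
  have hCij : (0:ℝ) < ((i+j).choose j : ℝ) := by
    exact_mod_cast Nat.choose_pos (by omega : j ≤ i + j)
  have hCnp : (0:ℝ) < ((n+p).choose p : ℝ) := by
    exact_mod_cast Nat.choose_pos (by omega : p ≤ n + p)
  have c1 : ((i+j).choose j : ℝ) * i.factorial * j.factorial = (i+j).factorial := by
    exact_mod_cast Nat.add_choose_mul_factorial_mul_factorial i j
  have c2 : ((n+p).choose p : ℝ) * n.factorial * p.factorial = (n+p).factorial := by
    exact_mod_cast Nat.add_choose_mul_factorial_mul_factorial n p
  -- key combinatorial identity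
  have key : ((i+j).choose j : ℝ) * QE = ((n+p).choose p : ℝ) * (QA * QB) := by
    have hM : ((i.factorial : ℝ) * j.factorial * (i+j).factorial) ≠ 0 := by positivity
    apply mul_right_cancel₀ hM
    linear_combination (((i+j).choose j : ℝ) * i.factorial * j.factorial) * f3
      + ((n+p).factorial : ℝ) * c1 - ((i+j).factorial : ℝ) * c2
      - (((n+p).choose p : ℝ) * QB * j.factorial * (i+j).factorial) * f1
      - (((n+p).choose p : ℝ) * n.factorial * (i+j).factorial) * f2
  have ha : (i:ℝ) + δ'/2 + ((j:ℝ) + δ/2) = ((i+j:ℕ):ℝ) + (δ+δ')/2 := by push_cast; ring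
  have hb : (n:ℝ) + δ'/2 + ((p:ℝ) + δ/2) = ((n+p:ℕ):ℝ) + (δ+δ')/2 := by push_cast; ring
  have hK : n + p - (i + j) = (n - i) + (p - j) := by omega
  rw [Beta, Beta, ha, hb, e1, e2, e3, ← h1, ← h2, ← h3, hK, pow_add]
  have hne1 : Real.Gamma ((i:ℝ) + δ'/2) * PA * (Real.Gamma ((j:ℝ) + δ/2) * PB) /
      (Real.Gamma (((i+j:ℕ):ℝ) + (δ+δ')/2) * PE) ≠ 0 := by positivity
  have hne2 : ((n+p).choose p : ℝ) * ((2:ℝ)^(n-i) * QA * PA) * ((2:ℝ)^(p-j) * QB * PB) ≠ 0 := by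
    positivity
  rw [div_eq_div_iff hne1 hne2]
  have hPEinv : PE * PE⁻¹ = 1 := mul_inv_cancel₀ hPE.ne'
  linear_combination
    (-(Real.Gamma ((i:ℝ) + δ'/2) * Real.Gamma ((j:ℝ) + δ/2) *
        (Real.Gamma (((i+j:ℕ):ℝ) + (δ+δ')/2))⁻¹ * PA * PB * (2:ℝ)^(n-i) * (2:ℝ)^(p-j))) * key
    - (Real.Gamma ((i:ℝ) + δ'/2) * Real.Gamma ((j:ℝ) + δ/2) *
        (Real.Gamma (((i+j:ℕ):ℝ) + (δ+δ')/2))⁻¹ * PA * PB * (2:ℝ)^(n-i) * (2:ℝ)^(p-j) *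
        ((i+j).choose j : ℝ) * QE) * hPEinv
end

section
/- Let k ≥ 0 be an integer and let b' > b_0 > b_1 > … > b_k be strictly decreasing real numbers. Then for all t ≥ 0: B_t(b', b_0, b_1, …, b_k) = e^{−b' t} ∫_0^t e^{b' s} B_s(b_0, b_1, …, b_k) ds. -/
open Finset Real

section Aux
open Polynomial

lemma sum_nodalWeight_eq_zero' {F : Type*} [Field F] {ι : Type*} [DecidableEq ι]
    {s : Finset ι} {v : ι → F} (hvs : Set.InjOn v s) (hs : 2 ≤ s.card) :
    ∑ i ∈ s, Lagrange.nodalWeight s v i = 0 := by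
  have hne : s.Nonempty := Finset.card_pos.mp (by omega)
  have h1 : Lagrange.interpolate s v 1 = 1 := Lagrange.interpolate_one hvs hne
  have h2 := congrArg (fun p : F[X] => p.coeff (s.card - 1)) h1
  simp only [Lagrange.interpolate_apply, Pi.one_apply, map_one, one_mul,
    Polynomial.finset_sum_coeff, Polynomial.coeff_one] at h2
  rw [if_neg (by omega)] at h2
  rw [← h2]
  refine Finset.sum_congr rfl fun i hi => ?_
  rw [Lagrange.basis_eq_prod_sub_inv_mul_nodal_div hi,
    ← Lagrange.nodal_erase_eq_nodal_div hi, Polynomial.coeff_C_mul]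
  have hmon : (Lagrange.nodal (s.erase i) v).Monic := Lagrange.nodal_monic
  have hdeg : (Lagrange.nodal (s.erase i) v).natDegree = s.card - 1 := by
    rw [Lagrange.natDegree_nodal, Finset.card_erase_of_mem hi]
  rw [← hdeg, hmon.coeff_natDegree, mul_one]

lemma my_integral_exp_mul' (c t : ℝ) (hc : c ≠ 0) :
    ∫ s in (0:ℝ)..t, Real.exp (c * s) = (Real.exp (c * t) - 1) / c := by
  have hderiv : ∀ s ∈ Set.uIcc (0:ℝ) t,
      HasDerivAt (fun x => Real.exp (c * x) / c) (Real.exp (c * s)) s := by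
    intro s _
    have h : HasDerivAt (fun x => Real.exp (c * x)) (Real.exp (c * s) * c) s := by
      have h' := (Real.hasDerivAt_exp (c * s)).comp s ((hasDerivAt_id s).const_mul c)
      simp at h'
      exact h'
    simpa [mul_div_assoc, mul_div_cancel_right₀ _ hc] using h.div_const c
  have hint : IntervalIntegrable (fun s => Real.exp (c * s)) MeasureTheory.volume 0 t :=
    (Real.continuous_exp.comp (continuous_const.mul continuous_id)).intervalIntegrable 0 t
  rw [intervalIntegral.integral_eq_sub_of_hasDerivAt hderiv hint]
  simp [sub_div]

lemma my_prod_shift' (k : ℕ) (f : ℕ → ℝ) (j : ℕ) :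
    ∏ l ∈ (Finset.range (k + 2)).erase (j + 1), f l
      = f 0 * ∏ l ∈ (Finset.range (k + 1)).erase j, f (l + 1) := by
  have hset : (Finset.range (k + 2)).erase (j + 1)
      = insert 0 (((Finset.range (k + 1)).erase j).image Nat.succ) := by
    ext l
    simp only [Finset.mem_erase, Finset.mem_range, Finset.mem_insert, Finset.mem_image,
      Nat.succ_eq_add_one]
    constructor
    · rintro ⟨hne, hlt⟩
      rcases Nat.eq_zero_or_pos l with h0 | h0
      · left; exact h0
      · right; exact ⟨l - 1, ⟨by omega, by omega⟩, by omega⟩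
    · rintro (rfl | ⟨a, ⟨h1, h2⟩, rfl⟩) <;> omega
  rw [hset, Finset.prod_insert (by simp), Finset.prod_image (by intro a _ b _ h; omega)]

lemma my_prod_sign' (k : ℕ) (b : ℕ → ℝ) (hdec : ∀ i j, i < j → j ≤ k + 1 → b j < b i)
    (i : ℕ) (hi : i ∈ Finset.range (k + 2)) :
    ∏ l ∈ (Finset.range (k + 2)).erase i, (b i - b l)
      = (-1 : ℝ) ^ i * ∏ l ∈ (Finset.range (k + 2)).erase i, |b i - b l| := by
  have hi' : i < k + 2 := Finset.mem_range.mp hi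
  have hfac : ∀ l ∈ (Finset.range (k + 2)).erase i,
      b i - b l = (if l < i then (-1 : ℝ) else 1) * |b i - b l| := by
    intro l hl
    obtain ⟨hne, hlr⟩ := Finset.mem_erase.mp hl
    have hlr' : l < k + 2 := Finset.mem_range.mp hlr
    rcases lt_or_gt_of_ne hne with h | h
    · have : b i < b l := hdec l i h (by omega)
      rw [if_pos h, abs_of_neg (by linarith)]; ring
    · have : b l < b i := hdec i l h (by omega)
      rw [if_neg (by omega), abs_of_pos (by linarith), one_mul]
  rw [Finset.prod_congr rfl hfac, Finset.prod_mul_distrib]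
  congr 1
  rw [Finset.prod_ite, Finset.prod_const, Finset.prod_const, one_pow, mul_one]
  congr 1
  have : ((Finset.range (k + 2)).erase i).filter (· < i) = Finset.range i := by
    ext l
    simp only [Finset.mem_filter, Finset.mem_erase, Finset.mem_range]
    omega
  rw [this, Finset.card_range]

end Aux

/-- Here `b 0` plays the role of `b'` and `b 1, …, b (k+1)` the roles of `b_0, …, b_k`. -/
theorem stmt6 (k : ℕ) (b : ℕ → ℝ) (hb : ∀ m : ℕ, m ≤ k → b (m + 1) < b m)
    (t : ℝ) (ht : 0 ≤ t) :
    Bt t (k + 1) b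
      = Real.exp (-(b 0) * t) * ∫ s in (0 : ℝ)..t, Real.exp (b 0 * s) * Bt s k (fun j => b (j + 1)) := by
  -- strict decrease
  have hdec' : ∀ j, j ≤ k + 1 → ∀ i, i < j → b j < b i := by
    intro j
    induction j with
    | zero => intro _ i hi; omega
    | succ n ih =>
      intro hn i hi
      have h1 : b (n + 1) < b n := hb n (by omega)
      rcases Nat.lt_succ_iff_lt_or_eq.mp hi with h | h
      · exact h1.trans (ih (by omega) i h)
      · subst h; exact h1
  have hdec : ∀ i j, i < j → j ≤ k + 1 → b j < b i := fun i j h1 h2 => hdec' j h2 i h1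
  set P : ℕ → ℝ := fun i => ∏ l ∈ (Finset.range (k + 2)).erase i, |b i - b l| with hPdef
  set Q : ℕ → ℝ := fun j => ∏ l ∈ (Finset.range (k + 1)).erase j, |b (j + 1) - b (l + 1)|
    with hQdef
  have hbne : ∀ i j : ℕ, i ≤ k + 1 → j ≤ k + 1 → i ≠ j → b i ≠ b j := by
    intro i j hi hj hij
    rcases lt_or_gt_of_ne hij with h | h
    · exact ne_of_gt (hdec i j h hj)
    · exact ne_of_lt (hdec j i h hi)
  have hPpos : ∀ i, i < k + 2 → 0 < P i := by
    intro i hi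
    refine Finset.prod_pos fun l hl => ?_
    obtain ⟨hne, hlr⟩ := Finset.mem_erase.mp hl
    have hlr' : l < k + 2 := Finset.mem_range.mp hlr
    exact abs_pos.mpr (sub_ne_zero.mpr (hbne i l (by omega) (by omega) (Ne.symm hne)))
  have hQpos : ∀ j, j < k + 1 → 0 < Q j := by
    intro j hj
    refine Finset.prod_pos fun l hl => ?_
    obtain ⟨hne, hlr⟩ := Finset.mem_erase.mp hl
    have hlr' : l < k + 1 := Finset.mem_range.mp hlr
    exact abs_pos.mpr (sub_ne_zero.mpr (hbne (j + 1) (l + 1) (by omega) (by omega) (by omega)))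
  have hc : ∀ j, j < k + 1 → 0 < b 0 - b (j + 1) := by
    intro j hj
    have := hdec 0 (j + 1) (by omega) (by omega)
    linarith
  have hPQ : ∀ j, j < k + 1 → P (j + 1) = (b 0 - b (j + 1)) * Q j := by
    intro j hj
    have h1 := my_prod_shift' k (fun l => |b (j + 1) - b l|) j
    have h2 : |b (j + 1) - b 0| = b 0 - b (j + 1) := by
      rw [abs_sub_comm, abs_of_pos (hc j hj)]
    simp only [hPdef, hQdef]
    rw [h1, h2]
  -- residue identity
  have hres : ∑ i ∈ Finset.range (k + 2), (-1 : ℝ) ^ i * (P i)⁻¹ = 0 := by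
    have hinj : Set.InjOn b (Finset.range (k + 2) : Finset ℕ) := by
      intro x hx y hy hxy
      simp only [Finset.coe_range, Set.mem_Iio] at hx hy
      by_contra hne
      exact hbne x y (by omega) (by omega) hne hxy
    have h0 := sum_nodalWeight_eq_zero' (s := Finset.range (k + 2)) (v := b) hinj (by simp)
    rw [← h0]
    refine Finset.sum_congr rfl fun i hi => ?_
    rw [Lagrange.nodalWeight, Finset.prod_inv_distrib, my_prod_sign' k b hdec i hi, mul_inv]
    rw [← inv_pow, inv_neg, inv_one]
  -- rewrite the integrand as a finite sum of exponentials
  have hint_eq : ∀ s : ℝ, Real.exp (b 0 * s) * Bt s k (fun j => b (j + 1))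
      = ∑ j ∈ Finset.range (k + 1),
          ((-1 : ℝ) ^ k * (-1 : ℝ) ^ j / Q j) * Real.exp ((b 0 - b (j + 1)) * s) := by
    intro s
    simp only [Bt, hQdef]
    rw [Finset.mul_sum, Finset.mul_sum]
    refine Finset.sum_congr rfl fun j hj => ?_
    rw [show (b 0 - b (j + 1)) * s = b 0 * s + -(b (j + 1)) * s by ring, Real.exp_add]
    ring
  -- compute the integral
  have hInt : (∫ s in (0:ℝ)..t, Real.exp (b 0 * s) * Bt s k (fun j => b (j + 1)))
      = ∑ j ∈ Finset.range (k + 1),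
          ((-1 : ℝ) ^ k * (-1 : ℝ) ^ j / Q j)
            * ((Real.exp ((b 0 - b (j + 1)) * t) - 1) / (b 0 - b (j + 1))) := by
    rw [intervalIntegral.integral_congr (g := fun s => ∑ j ∈ Finset.range (k + 1),
        ((-1 : ℝ) ^ k * (-1 : ℝ) ^ j / Q j) * Real.exp ((b 0 - b (j + 1)) * s))
        (fun s _ => hint_eq s)]
    rw [intervalIntegral.integral_finset_sum (fun j _ =>
      ((show Continuous fun x : ℝ => (-1 : ℝ) ^ k * (-1 : ℝ) ^ j / Q j
          * Real.exp ((b 0 - b (j + 1)) * x) by fun_prop).intervalIntegrable 0 t))]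
    refine Finset.sum_congr rfl fun j hj => ?_
    rw [intervalIntegral.integral_const_mul,
      my_integral_exp_mul' _ _ (hc j (Finset.mem_range.mp hj)).ne']
  -- unfold Bt on the left
  have hBt : Bt t (k + 1) b
      = (-1 : ℝ) ^ (k + 1) * ∑ i ∈ Finset.range (k + 2),
          (-1 : ℝ) ^ i * Real.exp (-(b i) * t) / P i := rfl
  rw [hBt, hInt, Finset.sum_range_succ']
  -- the residue identity, with the first term split off
  rw [Finset.sum_range_succ'] at hres
  have hP0 : (P 0)⁻¹ = ∑ j ∈ Finset.range (k + 1), (-1 : ℝ) ^ j * (P (j + 1))⁻¹ := by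
    have hneg : ∑ j ∈ Finset.range (k + 1), (-1 : ℝ) ^ (j + 1) * (P (j + 1))⁻¹
        = - ∑ j ∈ Finset.range (k + 1), (-1 : ℝ) ^ j * (P (j + 1))⁻¹ := by
      rw [← Finset.sum_neg_distrib]
      exact Finset.sum_congr rfl fun j _ => by ring
    rw [hneg] at hres
    simp only [pow_zero, one_mul] at hres
    linarith
  rw [pow_zero, one_mul, div_eq_mul_inv, hP0, Finset.mul_sum, ← Finset.sum_add_distrib,
    Finset.mul_sum, Finset.mul_sum]
  refine Finset.sum_congr rfl fun j hj => ?_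
  have hj' : j < k + 1 := Finset.mem_range.mp hj
  have hE : Real.exp (-(b (j + 1)) * t)
      = Real.exp ((b 0 - b (j + 1)) * t) * Real.exp (-(b 0) * t) := by
    rw [← Real.exp_add]; congr 1; ring
  have hc' := (hc j hj').ne'
  have hq := (hQpos j hj').ne'
  rw [hPQ j hj', hE]
  field_simp
  ring
end

section
/- Let δ, δ' ≥ 2 be real numbers and let L be the differential operator acting on twice differentiable functions h : (0,1) → ℝ by Lh(x) = 2x(1−x) h''(x) + [−δx + δ'(1−x)] h'(x). Then for all n, p ∈ ℕ and all x ∈ (0,1): L h_{n,p}(x) = −a_{n+p} h_{n,p}(x) + c_n(δ') h_{n−1,p}(x) + c_p(δ) h_{n,p−1}(x), where h_{i,j}(x) = x^i (1−x)^j and any term with a negative index is omitted (consistently with c_0(γ) = 0). -/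
open Finset Real

/-- `hF i j x = x^i (1-x)^j`. -/
noncomputable def hF (i j : ℕ) (x : ℝ) : ℝ := x ^ i * (1 - x) ^ j

lemma hF_hasDerivAt (n p : ℕ) (x : ℝ) :
    HasDerivAt (hF n p)
      ((n : ℝ) * x ^ (n - 1) * (1 - x) ^ p - (p : ℝ) * x ^ n * (1 - x) ^ (p - 1)) x := by
  have h1 : HasDerivAt (fun y : ℝ => y ^ n) ((n : ℝ) * x ^ (n - 1)) x := hasDerivAt_pow n x
  have h2 : HasDerivAt (fun y : ℝ => (1 - y) ^ p) (-((p : ℝ) * (1 - x) ^ (p - 1))) x := by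
    have := (hasDerivAt_pow p (1 - x)).comp x ((hasDerivAt_id x).const_sub 1)
    simpa [Function.comp_def] using this
  have := h1.mul h2
  exact this.congr_deriv (by ring)

lemma hF_deriv (n p : ℕ) :
    deriv (hF n p) = fun x =>
      (n : ℝ) * x ^ (n - 1) * (1 - x) ^ p - (p : ℝ) * x ^ n * (1 - x) ^ (p - 1) := by
  funext x
  exact (hF_hasDerivAt n p x).deriv

lemma hF_deriv2 (n p : ℕ) (x : ℝ) :
    deriv (deriv (hF n p)) x =
      (n : ℝ) * ((n - 1 : ℕ) : ℝ) * x ^ (n - 1 - 1) * (1 - x) ^ p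
        - 2 * (n : ℝ) * (p : ℝ) * x ^ (n - 1) * (1 - x) ^ (p - 1)
        + (p : ℝ) * ((p - 1 : ℕ) : ℝ) * x ^ n * (1 - x) ^ (p - 1 - 1) := by
  rw [hF_deriv]
  have h1 : HasDerivAt (fun y : ℝ => y ^ (n - 1)) (((n - 1 : ℕ) : ℝ) * x ^ (n - 1 - 1)) x :=
    hasDerivAt_pow (n - 1) x
  have h2 : HasDerivAt (fun y : ℝ => (1 - y) ^ p) (-((p : ℝ) * (1 - x) ^ (p - 1))) x := by
    have := (hasDerivAt_pow p (1 - x)).comp x ((hasDerivAt_id x).const_sub 1)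
    simpa [Function.comp_def] using this
  have h3 : HasDerivAt (fun y : ℝ => y ^ n) ((n : ℝ) * x ^ (n - 1)) x := hasDerivAt_pow n x
  have h4 : HasDerivAt (fun y : ℝ => (1 - y) ^ (p - 1))
      (-(((p - 1 : ℕ) : ℝ) * (1 - x) ^ (p - 1 - 1))) x := by
    have := (hasDerivAt_pow (p - 1) (1 - x)).comp x ((hasDerivAt_id x).const_sub 1)
    simpa [Function.comp_def] using this
  have H := (((h1.const_mul (n : ℝ)).mul h2).sub ((h3.const_mul (p : ℝ)).mul h4))
  have := H.deriv
  refine this.trans ?_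
  ring

theorem stmt7 (δ δ' : ℝ) (hδ : 2 ≤ δ) (hδ' : 2 ≤ δ') (n p : ℕ)
    (x : ℝ) (hx : x ∈ Set.Ioo (0 : ℝ) 1) :
    2 * x * (1 - x) * deriv (deriv (hF n p)) x + (-δ * x + δ' * (1 - x)) * deriv (hF n p) x
      = -(aC δ δ' (n + p)) * hF n p x + cC δ' n * hF (n - 1) p x + cC δ p * hF n (p - 1) x := by
  rw [hF_deriv2, hF_deriv]
  rcases n with _ | _ | n <;> rcases p with _ | _ | p <;>
    simp only [hF, aC, cC, Nat.add_sub_cancel, Nat.succ_sub_one] <;> push_cast <;> ring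
end

section
/- Let δ, δ' ≥ 2 be real numbers. Then for every integer i ≥ 0 and every t ≥ 0: Σ_{k=0}^{i} (Π_{m=i−k+1}^{i} a_m) · B_t(a_i, a_{i−1}, …, a_{i−k}) = 1, where the k = 0 term equals e^{−a_i t} and an empty product equals 1. -/
open Finset Real

lemma tele (β : ℕ → ℝ) (i : ℕ) (hβ : ∀ j l, j < l → l ≤ i → β l < β j) (n : ℕ) :
    ∀ K, n ≤ K → K ≤ i →
    ∑ k ∈ Finset.Icc n K, (-1:ℝ)^k * (∏ j ∈ Finset.range k, β j) /
        ∏ l ∈ (Finset.range (k+1)).erase n, (β n - β l)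
    = (-1:ℝ)^K * (∏ j ∈ (Finset.range (K+1)).erase n, β j) /
        ∏ l ∈ (Finset.range (K+1)).erase n, (β n - β l) := by
  intro K
  induction K with
  | zero =>
    intro h1 h2
    interval_cases n
    simp
  | succ K ih =>
    intro h1 h2
    rcases Nat.lt_or_ge n (K+1) with hlt | hge
    · have hnK : n ≤ K := by omega
      rw [Finset.sum_Icc_succ_top h1, ih hnK (by omega)]
      have hset : (Finset.range (K+2)).erase n = insert (K+1) ((Finset.range (K+1)).erase n) := by
        ext x; simp [Finset.mem_erase, Finset.mem_range, Finset.mem_insert]; omega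
      have hset2 : Finset.range (K+1) = insert n ((Finset.range (K+1)).erase n) := by
        rw [Finset.insert_erase]; simp; omega
      have hD : ∏ l ∈ (Finset.range (K+1)).erase n, (β n - β l) ≠ 0 := by
        apply Finset.prod_ne_zero_iff.2
        intro l hl
        simp [Finset.mem_erase, Finset.mem_range] at hl
        rcases Nat.lt_or_ge l n with h | h
        · have := hβ l n h (by omega); intro hc; nlinarith
        · have := hβ n l (by omega) (by omega); intro hc; nlinarith
      have hd : β n - β (K+1) ≠ 0 := by
        have := hβ n (K+1) hlt h2; intro hc; nlinarith
      rw [hset, Finset.prod_insert (by simp), Finset.prod_insert (by simp)]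
      rw [hset2, Finset.prod_insert (by simp)]
      field_simp
      rw [Finset.erase_insert_eq_erase, Finset.erase_idem]
      ring
    · have hn : n = K + 1 := by omega
      subst hn
      rw [Finset.Icc_self, Finset.sum_singleton]
      have : (Finset.range (K+2)).erase (K+1) = Finset.range (K+1) := by
        ext x; simp [Finset.mem_erase, Finset.mem_range]; omega
      rw [this]

lemma absprod (β : ℕ → ℝ) (i : ℕ) (hβ : ∀ j l, j < l → l ≤ i → β l < β j)
    (j k : ℕ) (hj : j ≤ k) (hk : k ≤ i) :
    ∏ l ∈ (Finset.range (k+1)).erase j, |β j - β l|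
      = (-1:ℝ)^j * ∏ l ∈ (Finset.range (k+1)).erase j, (β j - β l) := by
  have hsplit : (Finset.range (k+1)).erase j = Finset.range j ∪ Finset.Ico (j+1) (k+1) := by
    ext x; simp [Finset.mem_erase, Finset.mem_range, Finset.mem_union, Finset.mem_Ico]; omega
  have hdisj : Disjoint (Finset.range j) (Finset.Ico (j+1) (k+1)) := by
    simp [Finset.disjoint_left, Finset.mem_range, Finset.mem_Ico]; omega
  rw [hsplit, Finset.prod_union hdisj, Finset.prod_union hdisj]
  have h1 : ∏ l ∈ Finset.range j, |β j - β l| = (-1:ℝ)^j * ∏ l ∈ Finset.range j, (β j - β l) := by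
    rw [show ((-1:ℝ)^j : ℝ) = ∏ _l ∈ Finset.range j, (-1:ℝ) by simp, ← Finset.prod_mul_distrib]
    apply Finset.prod_congr rfl
    intro l hl
    simp only [Finset.mem_range] at hl
    have := hβ l j hl (by omega)
    rw [abs_of_neg (by linarith)]; ring
  have h2 : ∏ l ∈ Finset.Ico (j+1) (k+1), |β j - β l| =
      ∏ l ∈ Finset.Ico (j+1) (k+1), (β j - β l) := by
    apply Finset.prod_congr rfl
    intro l hl
    simp only [Finset.mem_Ico] at hl
    have := hβ j l (by omega) (by omega)
    exact abs_of_pos (by linarith)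
  rw [h1, h2]; ring

lemma picc (δ δ' : ℝ) (i k : ℕ) (hk : k ≤ i) :
    ∏ m ∈ Finset.Icc (i - k + 1) i, aC δ δ' m = ∏ j ∈ Finset.range k, aC δ δ' (i - j) := by
  apply Finset.prod_nbij' (fun m => i - m) (fun j => i - j) <;>
    first
      | (intro m hm; simp only [Finset.mem_Icc, Finset.mem_range] at *; omega)
      | (intro m hm; simp only [Finset.mem_Icc, Finset.mem_range] at hm; congr 1; omega)

theorem stmt15 (δ δ' : ℝ) (hδ : 2 ≤ δ) (hδ' : 2 ≤ δ') (i : ℕ) (t : ℝ) (ht : 0 ≤ t) :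
    ∑ k ∈ Finset.range (i + 1),
        (∏ m ∈ Finset.Icc (i - k + 1) i, aC δ δ' m) * Bt t k (fun j => aC δ δ' (i - j)) = 1 := by
  set β : ℕ → ℝ := fun j => aC δ δ' (i - j) with hβdef
  have amono : ∀ m n : ℕ, m < n → aC δ δ' m < aC δ δ' n := by
    intro m n h
    have hm : (0:ℝ) ≤ m := Nat.cast_nonneg m
    have hmn : (m:ℝ) < n := by exact_mod_cast h
    unfold aC
    nlinarith [mul_pos (sub_pos.2 hmn) (show (0:ℝ) < 2*((n:ℝ)+(m:ℝ)) - 2 + δ + δ' by nlinarith)]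
  have hβ : ∀ j l, j < l → l ≤ i → β l < β j := by
    intro j l h hl
    exact amono (i - l) (i - j) (by omega)
  have hβi : β i = 0 := by simp [hβdef, aC]
  -- Step 1: rewrite each k-term as a double sum
  have step1 : ∀ k ∈ Finset.range (i+1),
      (∏ m ∈ Finset.Icc (i - k + 1) i, aC δ δ' m) * Bt t k β
      = ∑ j ∈ Finset.range (k+1), Real.exp (-(β j) * t) *
          ((-1:ℝ)^k * (∏ j' ∈ Finset.range k, β j') /
            ∏ l ∈ (Finset.range (k+1)).erase j, (β j - β l)) := by
    intro k hk
    simp only [Finset.mem_range] at hk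
    have hki : k ≤ i := by omega
    rw [picc δ δ' i k hki]
    unfold Bt
    rw [Finset.mul_sum, Finset.mul_sum]
    apply Finset.sum_congr rfl
    intro j hj
    simp only [Finset.mem_range] at hj
    rw [absprod β i hβ j k (by omega) hki]
    have hP : ∏ l ∈ (Finset.range (k+1)).erase j, (β j - β l) ≠ 0 := by
      apply Finset.prod_ne_zero_iff.2
      intro l hl
      simp [Finset.mem_erase, Finset.mem_range] at hl
      rcases Nat.lt_or_ge l j with h | h
      · have := hβ l j h (by omega); intro hc; nlinarith
      · have := hβ j l (by omega) (by omega); intro hc; nlinarith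
    have hs : ((-1:ℝ)^j) ≠ 0 := by positivity
    field_simp
    ring
  rw [Finset.sum_congr rfl step1]
  -- Step 2: swap sums
  rw [Finset.sum_comm' (s := Finset.range (i+1)) (t := fun k => Finset.range (k+1))
    (t' := Finset.range (i+1)) (s' := fun j => Finset.Icc j i)
    (by intro k j; simp [Finset.mem_range, Finset.mem_Icc]; omega)]
  -- Step 3: evaluate inner sums via telescoping
  have step3 : ∀ j ∈ Finset.range (i+1),
      ∑ k ∈ Finset.Icc j i, Real.exp (-(β j) * t) *
        ((-1:ℝ)^k * (∏ j' ∈ Finset.range k, β j') /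
          ∏ l ∈ (Finset.range (k+1)).erase j, (β j - β l))
      = Real.exp (-(β j) * t) *
          ((-1:ℝ)^i * (∏ j' ∈ (Finset.range (i+1)).erase j, β j') /
            ∏ l ∈ (Finset.range (i+1)).erase j, (β j - β l)) := by
    intro j hj
    simp only [Finset.mem_range] at hj
    rw [← Finset.mul_sum, tele β i hβ j i (by omega) le_rfl]
  rw [Finset.sum_congr rfl step3]
  -- Step 4: all terms vanish except j = i
  rw [Finset.sum_eq_single_of_mem i (by simp)]
  · have herase : (Finset.range (i+1)).erase i = Finset.range i := by
      ext x; simp [Finset.mem_erase, Finset.mem_range]; omega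
    rw [herase, hβi]
    have hnum : ∏ l ∈ Finset.range i, ((0:ℝ) - β l) = (-1:ℝ)^i * ∏ l ∈ Finset.range i, β l := by
      rw [show ((-1:ℝ)^i : ℝ) = ∏ _l ∈ Finset.range i, (-1:ℝ) by simp, ← Finset.prod_mul_distrib]
      apply Finset.prod_congr rfl; intro l hl; ring
    rw [hnum]
    have hne : ∏ l ∈ Finset.range i, β l ≠ 0 := by
      apply Finset.prod_ne_zero_iff.2
      intro l hl
      simp only [Finset.mem_range] at hl
      have := hβ l i hl le_rfl
      rw [hβi] at this; linarith
    have : (-1:ℝ)^i ≠ 0 := by positivity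
    field_simp
    simp
  · intro j hj hne
    simp only [Finset.mem_range] at hj
    have hi : i ∈ (Finset.range (i+1)).erase j := by
      simp [Finset.mem_erase, Finset.mem_range]; omega
    rw [Finset.prod_eq_zero hi hβi]
    simp
end

section
/- Let δ, δ' ≥ 2 be real numbers. Then for all integers i, j with 0 ≤ i ≤ j and every t ≥ 0: e^{−a_j t} + Σ_{0≤k≤i, 0≤l≤j−i, (k,l)≠(0,0)} [C(i,k) C(j−i,l) / C(j, k+l)] · (Π_{m=j−k−l+1}^{j} a_m) · B_t(a_j, a_{j−1}, …, a_{j−k−l}) = 1, where C(m,k) denotes the binomial coefficient. -/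
open Finset Real

open Filter

noncomputable def DD (a : ℕ → ℝ) (j n r : ℕ) : ℝ :=
  ∏ l ∈ (Finset.range (n+1)).erase r, |a (j - r) - a (j - l)|

noncomputable def PP (a : ℕ → ℝ) (j n : ℕ) : ℝ :=
  ∏ m ∈ Finset.Icc (j - n + 1) j, a m

section Aux
variable {a : ℕ → ℝ} {j n r : ℕ}

lemma b_lt (ha : StrictMono a) {r l : ℕ} (hrl : r < l) (hlj : l ≤ j) :
    a (j - l) < a (j - r) := ha (by omega)

lemma DD_pos (ha : StrictMono a) (hnj : n ≤ j) (hr : r ≤ n) : 0 < DD a j n r := by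
  unfold DD
  apply Finset.prod_pos
  intro l hl
  rw [Finset.mem_erase, Finset.mem_range] at hl
  rw [abs_pos, sub_ne_zero]
  intro h
  have h2 : j - r = j - l := ha.injective h
  exact hl.1 (by omega)

lemma DD_succ (ha : StrictMono a) (hnj : n ≤ j) (hr : r < n) :
    DD a j n r = (a (j - r) - a (j - n)) * DD a j (n-1) r := by
  unfold DD
  have h1 : n - 1 + 1 = n := by omega
  rw [h1, Finset.range_add_one, Finset.erase_insert_of_ne (by omega : n ≠ r),
    Finset.prod_insert (by simp)]
  congr 1
  exact abs_of_pos (sub_pos.mpr (b_lt ha hr hnj))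

end Aux

lemma hasDerivAt_Bt_s16 (b : ℕ → ℝ) (n : ℕ) (t : ℝ) :
    HasDerivAt (fun t => Bt t n b)
      ((-1:ℝ)^n * ∑ r ∈ Finset.range (n + 1),
        (-1:ℝ)^r * (Real.exp (-(b r) * t) * (-(b r))) /
          ∏ l ∈ (Finset.range (n + 1)).erase r, |b r - b l|) t := by
  unfold Bt
  apply HasDerivAt.const_mul
  apply HasDerivAt.fun_sum
  intro r _
  apply HasDerivAt.div_const
  have h : HasDerivAt (fun t : ℝ => Real.exp (-(b r) * t)) (Real.exp (-(b r) * t) * (-(b r))) t := by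
    simpa using ((hasDerivAt_id t).const_mul (-(b r))).exp
  exact h.const_mul _

lemma Bt_eq_DD (t : ℝ) (n : ℕ) (a : ℕ → ℝ) (j : ℕ) :
    Bt t n (fun r => a (j - r)) =
      (-1:ℝ)^n * ∑ r ∈ Finset.range (n + 1),
        (-1:ℝ)^r * Real.exp (-(a (j - r)) * t) / DD a j n r := rfl

lemma deriv_core {a : ℕ → ℝ} {j n : ℕ} (ha : StrictMono a) (hn1 : 1 ≤ n) (hnj : n ≤ j) (t : ℝ) :
    (-1:ℝ)^n * ∑ r ∈ Finset.range (n + 1),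
        (-1:ℝ)^r * (Real.exp (-(a (j - r)) * t) * (-(a (j - r)))) / DD a j n r
      = -(a (j - n)) * Bt t n (fun r => a (j - r)) + Bt t (n-1) (fun r => a (j - r)) := by
  have key : (-1:ℝ)^n * ∑ r ∈ Finset.range (n + 1),
      (-1:ℝ)^r * (Real.exp (-(a (j - r)) * t) * (a (j - n) - a (j - r))) / DD a j n r
      = Bt t (n-1) (fun r => a (j - r)) := by
    rw [Finset.sum_range_succ]
    simp only [sub_self, mul_zero, zero_div, add_zero]
    rw [Bt_eq_DD, Finset.mul_sum, Finset.mul_sum]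
    have hrange : n - 1 + 1 = n := by omega
    rw [hrange]
    apply Finset.sum_congr rfl
    intro r hr
    rw [Finset.mem_range] at hr
    have hd := DD_succ ha hnj hr
    have hpos : (0:ℝ) < a (j - r) - a (j - n) := sub_pos.mpr (b_lt ha hr hnj)
    have hDpos : (0:ℝ) < DD a j (n-1) r := DD_pos ha (by omega) (by omega)
    rw [hd]
    have hsign : (-1:ℝ)^n = (-1:ℝ)^(n-1) * (-1) := by
      conv_lhs => rw [show n = (n-1)+1 by omega]
      rw [pow_succ]
    rw [hsign]
    field_simp
    ring
  have expand : ∀ r ∈ Finset.range (n + 1),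
      (-1:ℝ)^r * (Real.exp (-(a (j - r)) * t) * (-(a (j - r)))) / DD a j n r
      = (-1:ℝ)^r * (Real.exp (-(a (j - r)) * t) * (a (j - n) - a (j - r))) / DD a j n r
        - a (j - n) * ((-1:ℝ)^r * Real.exp (-(a (j - r)) * t) / DD a j n r) := by
    intro r _; ring
  rw [Finset.sum_congr rfl expand, Finset.sum_sub_distrib, ← Finset.mul_sum, mul_sub, key,
    Bt_eq_DD t n]
  ring

lemma PP_zero (a : ℕ → ℝ) (j : ℕ) : PP a j 0 = 1 := by
  unfold PP
  rw [Finset.Icc_eq_empty (by omega), Finset.prod_empty]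

lemma PP_succ {a : ℕ → ℝ} {j n : ℕ} (hn1 : 1 ≤ n) (hnj : n ≤ j) :
    PP a j n = a (j - (n-1)) * PP a j (n-1) := by
  unfold PP
  rw [← Finset.Ico_add_one_right_eq_Icc, ← Finset.Ico_add_one_right_eq_Icc, show j - n + 1 = j - (n-1) from by omega,
    Finset.prod_eq_prod_Ico_succ_bot (by omega : j - (n-1) < j + 1)]

lemma hasDerivAt_term {a : ℕ → ℝ} {j n : ℕ} (ha : StrictMono a) (hnj : n ≤ j) (t : ℝ) :
    HasDerivAt (fun t => PP a j n * Bt t n (fun r => a (j - r)))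
      (-(a (j - n)) * (PP a j n * Bt t n (fun r => a (j - r))) +
        (if n = 0 then 0 else
          a (j - (n-1)) * (PP a j (n-1) * Bt t (n-1) (fun r => a (j - r))))) t := by
  have h := (hasDerivAt_Bt_s16 (fun r => a (j - r)) n t).const_mul (PP a j n)
  rcases Nat.eq_zero_or_pos n with hn | hn
  · subst hn
    simp only [if_pos rfl, add_zero]
    refine h.congr_deriv ?_
    simp [Bt, Finset.sum_range_succ]
    ring
  · rw [if_neg (by omega)]
    refine h.congr_deriv ?_
    rw [show ((-1:ℝ)^n * ∑ r ∈ Finset.range (n + 1),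
        (-1:ℝ)^r * (Real.exp (-(a (j - r)) * t) * (-(a (j - r)))) /
          ∏ l ∈ (Finset.range (n + 1)).erase r, |a (j - r) - a (j - l)|)
        = -(a (j - n)) * Bt t n (fun r => a (j - r)) + Bt t (n-1) (fun r => a (j - r))
      from deriv_core ha hn hnj t, PP_succ hn hnj]
    ring

lemma sum_d_zero {a : ℕ → ℝ} (ha0 : a 0 = 0) (j : ℕ) (t : ℝ) :
    ∑ n ∈ Finset.range (j+1),
      (-(a (j - n)) * (PP a j n * Bt t n (fun r => a (j - r))) +
        (if n = 0 then 0 else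
          a (j - (n-1)) * (PP a j (n-1) * Bt t (n-1) (fun r => a (j - r))))) = 0 := by
  rw [Finset.sum_add_distrib]
  have h1 : (∑ n ∈ Finset.range (j+1), -a (j - n) * (PP a j n * Bt t n (fun r => a (j - r))))
      = -(∑ n ∈ Finset.range j, a (j - n) * (PP a j n * Bt t n (fun r => a (j - r)))) := by
    simp only [neg_mul]
    rw [Finset.sum_neg_distrib, Finset.sum_range_succ, Nat.sub_self, ha0]
    simp
  have h2 : (∑ n ∈ Finset.range (j+1),
      (if n = 0 then 0 else a (j - (n-1)) * (PP a j (n-1) * Bt t (n-1) (fun r => a (j - r)))))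
      = ∑ n ∈ Finset.range j, a (j - n) * (PP a j n * Bt t n (fun r => a (j - r))) := by
    rw [Finset.sum_range_succ']
    simp
  rw [h1, h2, neg_add_cancel]

lemma PD_eq {a : ℕ → ℝ} (ha : StrictMono a) (ha0 : a 0 = 0) (j : ℕ) :
    PP a j j = DD a j j j := by
  unfold PP DD
  rw [show j - j + 1 = 1 from by omega, ← Finset.Ico_add_one_right_eq_Icc, Finset.prod_Ico_eq_prod_range,
    Finset.range_add_one, Finset.erase_insert (by simp)]
  have habs : ∀ l ∈ Finset.range j, |a (j - j) - a (j - l)| = a (j - l) := by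
    intro l hl; rw [Finset.mem_range] at hl
    rw [Nat.sub_self, ha0, zero_sub, abs_neg, abs_of_pos]
    have h := ha (show 0 < j - l by omega)
    rwa [ha0] at h
  rw [Finset.prod_congr rfl habs, ← Finset.prod_range_reflect (fun l => a (j - l)) j]
  apply Finset.prod_congr rfl
  intro i hi; rw [Finset.mem_range] at hi
  congr 1; omega

lemma tendsto_S {a : ℕ → ℝ} (ha : StrictMono a) (ha0 : a 0 = 0) (j : ℕ) :
    Tendsto (fun x => ∑ n ∈ Finset.range (j+1), PP a j n * Bt x n (fun r => a (j - r)))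
      atTop (nhds 1) := by
  have hexp : ∀ r : ℕ, r ≤ j →
      Tendsto (fun x : ℝ => Real.exp (-(a (j - r)) * x)) atTop
        (nhds (if r = j then 1 else 0)) := by
    intro r hr
    rcases eq_or_ne r j with h | h
    · subst h
      simp only [if_pos rfl, Nat.sub_self, ha0, neg_zero, zero_mul, Real.exp_zero]
      exact tendsto_const_nhds
    · rw [if_neg h]
      have hc : 0 < a (j - r) := by
        have h2 := ha (show 0 < j - r by omega); rwa [ha0] at h2
      have h4 : Tendsto (fun x : ℝ => a (j - r) * x) atTop atTop :=
        Tendsto.const_mul_atTop hc tendsto_id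
      have h3 := Real.tendsto_exp_neg_atTop_nhds_zero.comp h4
      have heq : (fun x : ℝ => Real.exp (-(a (j - r)) * x))
          = (fun x => Real.exp (-x)) ∘ fun x : ℝ => a (j - r) * x := by
        funext x; simp [neg_mul]
      rwa [heq]
  have hBt : ∀ n : ℕ, n ≤ j →
      Tendsto (fun x : ℝ => Bt x n (fun r => a (j - r))) atTop
        (nhds ((-1:ℝ)^n * ∑ r ∈ Finset.range (n+1),
          (-1:ℝ)^r * (if r = j then 1 else 0) / DD a j n r)) := by
    intro n hn
    simp only [Bt_eq_DD]
    apply Tendsto.const_mul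
    apply tendsto_finset_sum
    intro r hr
    rw [Finset.mem_range] at hr
    exact ((hexp r (by omega)).const_mul _).div_const _
  have hsum : Tendsto (fun x => ∑ n ∈ Finset.range (j+1), PP a j n * Bt x n (fun r => a (j - r)))
      atTop (nhds (∑ n ∈ Finset.range (j+1), PP a j n * ((-1:ℝ)^n * ∑ r ∈ Finset.range (n+1),
          (-1:ℝ)^r * (if r = j then 1 else 0) / DD a j n r))) := by
    apply tendsto_finset_sum
    intro n hn
    rw [Finset.mem_range] at hn
    exact (hBt n (by omega)).const_mul _
  have hval : (∑ n ∈ Finset.range (j+1), PP a j n * ((-1:ℝ)^n * ∑ r ∈ Finset.range (n+1),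
      (-1:ℝ)^r * (if r = j then 1 else 0) / DD a j n r)) = 1 := by
    rw [Finset.sum_eq_single j]
    · have hinner : (∑ r ∈ Finset.range (j+1),
          (-1:ℝ)^r * (if r = j then 1 else 0) / DD a j j r) = (-1:ℝ)^j / DD a j j j := by
        rw [Finset.sum_range_succ, if_pos rfl]
        rw [Finset.sum_eq_zero, zero_add, mul_one]
        intro r hr
        rw [Finset.mem_range] at hr
        rw [if_neg (by omega), mul_zero, zero_div]
      rw [hinner]
      have hsq : (-1:ℝ)^j * ((-1:ℝ)^j / DD a j j j) = 1 / DD a j j j := by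
        rw [mul_div_assoc', ← pow_add]
        congr 1
        exact Even.neg_one_pow ⟨j, by ring⟩
      rw [hsq, PD_eq ha ha0 j, one_div]
      exact mul_inv_cancel₀ (ne_of_gt (DD_pos ha le_rfl le_rfl))
    · intro n hn hne
      rw [Finset.mem_range] at hn
      have h0 : (∑ r ∈ Finset.range (n+1),
          (-1:ℝ)^r * (if r = j then 1 else 0) / DD a j n r) = 0 := by
        apply Finset.sum_eq_zero
        intro r hr
        rw [Finset.mem_range] at hr
        rw [if_neg (by omega), mul_zero, zero_div]
      rw [h0, mul_zero, mul_zero]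
    · intro h
      exact absurd (Finset.self_mem_range_succ j) h
  rwa [hval] at hsum

theorem keyS {a : ℕ → ℝ} (ha : StrictMono a) (ha0 : a 0 = 0) (j : ℕ) (t : ℝ) :
    ∑ n ∈ Finset.range (j+1), PP a j n * Bt t n (fun r => a (j - r)) = 1 := by
  set S : ℝ → ℝ := fun t => ∑ n ∈ Finset.range (j+1), PP a j n * Bt t n (fun r => a (j - r))
    with hSdef
  have hderiv : ∀ x : ℝ, HasDerivAt S 0 x := by
    intro x
    have h1 : HasDerivAt S (∑ n ∈ Finset.range (j+1),
        (-(a (j - n)) * (PP a j n * Bt x n (fun r => a (j - r))) +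
          (if n = 0 then 0 else
            a (j - (n-1)) * (PP a j (n-1) * Bt x (n-1) (fun r => a (j - r)))))) x := by
      apply HasDerivAt.fun_sum
      intro n hn
      rw [Finset.mem_range] at hn
      exact hasDerivAt_term ha (by omega) x
    rwa [sum_d_zero ha0 j x] at h1
  have hconst := is_const_of_deriv_eq_zero
    (fun x => (hderiv x).differentiableAt) (fun x => (hderiv x).deriv)
  have hlim : Tendsto S atTop (nhds 1) := tendsto_S ha ha0 j
  have hlim2 : Tendsto S atTop (nhds (S t)) := by
    have hfe : S = fun _ => S t := funext fun x => hconst x t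
    rw [hfe]; exact tendsto_const_nhds
  exact tendsto_nhds_unique hlim2 hlim

lemma aC_strictMono {δ δ' : ℝ} (hδ : 2 ≤ δ) (hδ' : 2 ≤ δ') : StrictMono (aC δ δ') := by
  apply strictMono_nat_of_lt_succ
  intro n
  unfold aC
  have h0 : (0:ℝ) ≤ (n:ℝ) := Nat.cast_nonneg n
  push_cast
  nlinarith

theorem stmt16 (δ δ' : ℝ) (hδ : 2 ≤ δ) (hδ' : 2 ≤ δ')
    (i j : ℕ) (hij : i ≤ j) (t : ℝ) (ht : 0 ≤ t) :
    Real.exp (-(aC δ δ' j) * t) +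
        ∑ kl ∈ (Finset.range (i + 1) ×ˢ Finset.range (j - i + 1)).erase (0, 0),
          ((i.choose kl.1 : ℝ) * ((j - i).choose kl.2 : ℝ) / (j.choose (kl.1 + kl.2) : ℝ)) *
            (∏ m ∈ Finset.Icc (j - kl.1 - kl.2 + 1) j, aC δ δ' m) *
            Bt t (kl.1 + kl.2) (fun r => aC δ δ' (j - r))
      = 1 := by
  have ha : StrictMono (aC δ δ') := aC_strictMono hδ hδ'
  have ha0 : aC δ δ' 0 = 0 := by simp [aC]
  have hmem : ((0,0) : ℕ × ℕ) ∈ Finset.range (i + 1) ×ˢ Finset.range (j - i + 1) := by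
    simp
  have hA : Real.exp (-(aC δ δ' j) * t)
      = ((i.choose (0:ℕ×ℕ).1 : ℝ) * ((j - i).choose (0:ℕ×ℕ).2 : ℝ) /
          (j.choose ((0:ℕ×ℕ).1 + (0:ℕ×ℕ).2) : ℝ)) *
        (∏ m ∈ Finset.Icc (j - (0:ℕ×ℕ).1 - (0:ℕ×ℕ).2 + 1) j, aC δ δ' m) *
        Bt t ((0:ℕ×ℕ).1 + (0:ℕ×ℕ).2) (fun r => aC δ δ' (j - r)) := by
    have hempty : Finset.Icc (j + 1) j = (∅ : Finset ℕ) := Finset.Icc_eq_empty (by omega)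
    simp [Bt, hempty]
  have hstepA : Real.exp (-(aC δ δ' j) * t) +
      ∑ kl ∈ (Finset.range (i + 1) ×ˢ Finset.range (j - i + 1)).erase (0, 0),
        ((i.choose kl.1 : ℝ) * ((j - i).choose kl.2 : ℝ) / (j.choose (kl.1 + kl.2) : ℝ)) *
          (∏ m ∈ Finset.Icc (j - kl.1 - kl.2 + 1) j, aC δ δ' m) *
          Bt t (kl.1 + kl.2) (fun r => aC δ δ' (j - r))
      = ∑ kl ∈ Finset.range (i + 1) ×ˢ Finset.range (j - i + 1),
        ((i.choose kl.1 : ℝ) * ((j - i).choose kl.2 : ℝ) / (j.choose (kl.1 + kl.2) : ℝ)) *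
          (∏ m ∈ Finset.Icc (j - kl.1 - kl.2 + 1) j, aC δ δ' m) *
          Bt t (kl.1 + kl.2) (fun r => aC δ δ' (j - r)) := by
    rw [hA]
    exact Finset.add_sum_erase _ (fun kl : ℕ × ℕ =>
      ((i.choose kl.1 : ℝ) * ((j - i).choose kl.2 : ℝ) / (j.choose (kl.1 + kl.2) : ℝ)) *
        (∏ m ∈ Finset.Icc (j - kl.1 - kl.2 + 1) j, aC δ δ' m) *
        Bt t (kl.1 + kl.2) (fun r => aC δ δ' (j - r))) hmem
  rw [hstepA]
  rw [← Finset.sum_fiberwise_of_maps_to (g := fun kl : ℕ × ℕ => kl.1 + kl.2)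
    (t := Finset.range (j + 1))
    (by intro kl hkl
        rw [Finset.mem_product, Finset.mem_range, Finset.mem_range] at hkl
        rw [Finset.mem_range]
        change kl.1 + kl.2 < j + 1
        omega)]
  have hinner : ∀ n ∈ Finset.range (j + 1),
      (∑ kl ∈ (Finset.range (i + 1) ×ˢ Finset.range (j - i + 1)).filter
          (fun kl => kl.1 + kl.2 = n),
        ((i.choose kl.1 : ℝ) * ((j - i).choose kl.2 : ℝ) / (j.choose (kl.1 + kl.2) : ℝ)) *
          (∏ m ∈ Finset.Icc (j - kl.1 - kl.2 + 1) j, aC δ δ' m) *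
          Bt t (kl.1 + kl.2) (fun r => aC δ δ' (j - r)))
      = PP (aC δ δ') j n * Bt t n (fun r => aC δ δ' (j - r)) := by
    intro n hn
    rw [Finset.mem_range] at hn
    have hstep : ∀ kl ∈ (Finset.range (i + 1) ×ˢ Finset.range (j - i + 1)).filter
        (fun kl => kl.1 + kl.2 = n),
        ((i.choose kl.1 : ℝ) * ((j - i).choose kl.2 : ℝ) / (j.choose (kl.1 + kl.2) : ℝ)) *
          (∏ m ∈ Finset.Icc (j - kl.1 - kl.2 + 1) j, aC δ δ' m) *
          Bt t (kl.1 + kl.2) (fun r => aC δ δ' (j - r))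
        = ((i.choose kl.1 : ℝ) * ((j - i).choose kl.2 : ℝ)) *
            ((1 / (j.choose n : ℝ)) *
              (PP (aC δ δ') j n * Bt t n (fun r => aC δ δ' (j - r)))) := by
      intro kl hkl
      rw [Finset.mem_filter] at hkl
      obtain ⟨_, hsum⟩ := hkl
      rw [Nat.sub_sub, hsum]
      unfold PP
      ring
    rw [Finset.sum_congr rfl hstep, ← Finset.sum_mul]
    have hCnat : (∑ kl ∈ (Finset.range (i + 1) ×ˢ Finset.range (j - i + 1)).filter
        (fun kl => kl.1 + kl.2 = n), i.choose kl.1 * (j - i).choose kl.2) = j.choose n := by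
      have hsub : (Finset.range (i + 1) ×ˢ Finset.range (j - i + 1)).filter
          (fun kl => kl.1 + kl.2 = n) ⊆ Finset.HasAntidiagonal.antidiagonal n := by
        intro kl hkl
        rw [Finset.mem_filter] at hkl
        rw [Finset.HasAntidiagonal.mem_antidiagonal]
        exact hkl.2
      have hz : ∀ kl ∈ Finset.HasAntidiagonal.antidiagonal n,
          kl ∉ (Finset.range (i + 1) ×ˢ Finset.range (j - i + 1)).filter
            (fun kl => kl.1 + kl.2 = n) → i.choose kl.1 * (j - i).choose kl.2 = 0 := by
        intro kl hkl hnot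
        rw [Finset.HasAntidiagonal.mem_antidiagonal] at hkl
        rw [Finset.mem_filter, Finset.mem_product, Finset.mem_range, Finset.mem_range] at hnot
        have hno : ¬(kl.1 < i + 1 ∧ kl.2 < j - i + 1) := by tauto
        rcases Nat.lt_or_ge i kl.1 with h | h
        · rw [Nat.choose_eq_zero_of_lt h, zero_mul]
        · have h2 : j - i < kl.2 := by omega
          rw [Nat.choose_eq_zero_of_lt h2, mul_zero]
      rw [Finset.sum_subset hsub hz, ← Nat.add_choose_eq]
      congr 1
      omega
    have hC : (∑ kl ∈ (Finset.range (i + 1) ×ˢ Finset.range (j - i + 1)).filter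
        (fun kl => kl.1 + kl.2 = n),
        ((i.choose kl.1 : ℝ) * ((j - i).choose kl.2 : ℝ))) = (j.choose n : ℝ) := by
      rw [← hCnat]
      push_cast
      rfl
    rw [hC]
    have hne : (j.choose n : ℝ) ≠ 0 :=
      Nat.cast_ne_zero.mpr (Nat.choose_pos (by omega)).ne'
    field_simp
  rw [Finset.sum_congr rfl hinner]
  exact keyS ha ha0 j t
end

section
/- Let δ, δ' ≥ 2 be real numbers. Then for every integer i ≥ 1 and every integer j with 0 ≤ j ≤ i−1: Σ_{k=j}^{i} (−1)^{k+j} · (Π_{m=i−k+1}^{i} a_m) / (Π_{0≤l≤k, l≠j} |a_{i−j} − a_{i−l}|) = 0, where an empty product equals 1. -/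
open Finset Real

lemma auxTel (X : ℕ → ℝ) (j : ℕ) (hX : X j ≠ 0) :
    ∀ K, j ≤ K → (∀ l, l ≤ K → l ≠ j → X j - X l ≠ 0) →
    ∑ k ∈ Finset.Icc j K, ((-1:ℝ)^k * ∏ l ∈ Finset.range k, X l) /
        (∏ l ∈ (Finset.range (k+1)).erase j, (X j - X l))
    = ((-1:ℝ)^K * ∏ l ∈ Finset.range (K+1), X l) /
        (X j * ∏ l ∈ (Finset.range (K+1)).erase j, (X j - X l)) := by
  intro K
  induction K with
  | zero =>
    intro hjK _
    interval_cases j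
    simp [div_self hX]
  | succ K ih =>
    intro hjK h
    rcases eq_or_lt_of_le hjK with heq | hlt
    · -- j = K+1 : single term
      subst heq
      rw [Finset.Icc_self, Finset.sum_singleton]
      have he : (Finset.range (K+1+1)).erase (K+1) = Finset.range (K+1) := by
        ext l; simp; omega
      have hDne : (∏ l ∈ Finset.range (K+1), (X (K+1) - X l)) ≠ 0 :=
        Finset.prod_ne_zero_iff.mpr fun l hl => by
          simp only [Finset.mem_range] at hl
          exact h l (by omega) (by omega)
      rw [he, Finset.prod_range_succ X (K+1)]
      field_simp
    · have hjK' : j ≤ K := by omega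
      rw [Finset.sum_Icc_succ_top hjK, ih hjK' (fun l hl hlj => h l (by omega) hlj)]
      have hne : K + 1 ≠ j := by omega
      have he : (Finset.range (K+2)).erase j
          = insert (K+1) ((Finset.range (K+1)).erase j) := by
        ext l; simp; omega
      have hnotmem : K + 1 ∉ (Finset.range (K+1)).erase j := by simp
      rw [he, Finset.prod_insert hnotmem, Finset.prod_range_succ X (K+1)]
      set B := ∏ l ∈ (Finset.range (K+1)).erase j, (X j - X l) with hB
      set P := ∏ l ∈ Finset.range (K+1), X l with hP
      have hBne : B ≠ 0 := by
        rw [hB]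
        exact Finset.prod_ne_zero_iff.mpr fun l hl => by
          simp only [Finset.mem_erase, Finset.mem_range] at hl
          exact h l (by omega) hl.1
      have hdne : X j - X (K+1) ≠ 0 := h (K+1) le_rfl (by omega)
      field_simp
      ring

theorem stmt17 (δ δ' : ℝ) (hδ : 2 ≤ δ) (hδ' : 2 ≤ δ')
    (i : ℕ) (hi : 1 ≤ i) (j : ℕ) (hj : j ≤ i - 1) :
    ∑ k ∈ Finset.Icc j i,
        (-1 : ℝ) ^ (k + j) * (∏ m ∈ Finset.Icc (i - k + 1) i, aC δ δ' m) /
          (∏ l ∈ (Finset.range (k + 1)).erase j, |aC δ δ' (i - j) - aC δ δ' (i - l)|)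
      = 0 := by
  have hji : j < i := by omega
  have hmono : StrictMono (aC δ δ') := by
    apply strictMono_nat_of_lt_succ
    intro n
    simp only [aC]
    push_cast
    nlinarith [Nat.cast_nonneg (α := ℝ) n]
  set X : ℕ → ℝ := fun l => aC δ δ' (i - l) with hXdef
  have hX0 : aC δ δ' 0 = 0 := by simp [aC]
  have hXj : X j ≠ 0 := by
    have : aC δ δ' 0 < aC δ δ' (i - j) := hmono (by omega)
    rw [hX0] at this
    exact ne_of_gt this
  have hdiff : ∀ l, l ≤ i → l ≠ j → X j - X l ≠ 0 := by
    intro l hl hlj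
    have : i - j ≠ i - l := by omega
    exact sub_ne_zero_of_ne (fun hc => this (hmono.injective hc))
  have hstep : ∀ k ∈ Finset.Icc j i,
      (-1 : ℝ) ^ (k + j) * (∏ m ∈ Finset.Icc (i - k + 1) i, aC δ δ' m) /
          (∏ l ∈ (Finset.range (k + 1)).erase j, |aC δ δ' (i - j) - aC δ δ' (i - l)|)
      = ((-1:ℝ)^k * ∏ l ∈ Finset.range k, X l) /
          (∏ l ∈ (Finset.range (k+1)).erase j, (X j - X l)) := by
    intro k hk
    simp only [Finset.mem_Icc] at hk
    obtain ⟨hjk, hki⟩ := hk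
    -- numerator product
    have hinj : Set.InjOn (fun l => i - l) (Finset.range k) := by
      intro x hx y hy hxy
      simp only [Finset.coe_range, Set.mem_Iio] at hx hy
      simp only at hxy
      omega
    have himg : (Finset.range k).image (fun l => i - l) = Finset.Icc (i - k + 1) i := by
      ext m
      simp only [Finset.mem_image, Finset.mem_range, Finset.mem_Icc]
      constructor
      · rintro ⟨l, hl, rfl⟩; omega
      · rintro ⟨h1, h2⟩; exact ⟨i - m, by omega, by omega⟩
    have hnum : ∏ m ∈ Finset.Icc (i - k + 1) i, aC δ δ' m = ∏ l ∈ Finset.range k, X l := by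
      rw [← himg, Finset.prod_image (fun x hx y hy => hinj hx hy)]
    -- denominator: abs vs signed
    have habs : ∀ l ∈ (Finset.range (k+1)).erase j,
        |aC δ δ' (i - j) - aC δ δ' (i - l)|
          = (if l < j then (-1:ℝ) else 1) * (X j - X l) := by
      intro l hl
      simp only [Finset.mem_erase, Finset.mem_range] at hl
      obtain ⟨hlj, hlk⟩ := hl
      by_cases hc : l < j
      · have : X j - X l < 0 := by
          have := hmono (show i - j < i - l by omega)
          simp only [hXdef]; linarith
        rw [if_pos hc, abs_of_neg this]; ring
      · have : 0 < X j - X l := by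
          have := hmono (show i - l < i - j by omega)
          simp only [hXdef]; linarith
        rw [if_neg hc, abs_of_pos this]; ring
    have hden : ∏ l ∈ (Finset.range (k+1)).erase j, |aC δ δ' (i - j) - aC δ δ' (i - l)|
        = (-1:ℝ)^j * ∏ l ∈ (Finset.range (k+1)).erase j, (X j - X l) := by
      rw [Finset.prod_congr rfl habs, Finset.prod_mul_distrib]
      congr 1
      rw [Finset.prod_ite, Finset.prod_const, Finset.prod_const, one_pow, mul_one]
      congr 1
      have : ((Finset.range (k+1)).erase j).filter (fun l => l < j) = Finset.range j := by
        ext l; simp; omega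
      rw [this, Finset.card_range]
    rw [hnum, hden, pow_add]
    have hDne : (∏ l ∈ (Finset.range (k+1)).erase j, (X j - X l)) ≠ 0 :=
      Finset.prod_ne_zero_iff.mpr fun l hl => by
        simp only [Finset.mem_erase, Finset.mem_range] at hl
        exact hdiff l (by omega) hl.1
    have hsj : ((-1:ℝ)^j) ≠ 0 := by positivity
    field_simp
  rw [Finset.sum_congr rfl hstep, auxTel X j hXj i (le_of_lt hji) hdiff]
  have : ∏ l ∈ Finset.range (i+1), X l = 0 := by
    apply Finset.prod_eq_zero (Finset.self_mem_range_succ i)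
    simp only [hXdef, Nat.sub_self, hX0]
  rw [this]
  simp
end
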